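/- arXiv:math/9201232 — 4 statements merged into one kernel-verified Lean document; each statement's English description precedes it below -/
import Mathlib

section
/- Let (A₀, A₁) be a compatible couple of Banach spaces and let x = (x_i) be a finitely supported sequence with x_i ∈ A₀ + A₁ for all i. Then for every t > 0, the quantity sup { Σ_i K_{t_i}(x_i; A₀, A₁) : t_i ≥ 0, Σ_i t_i ≤ t } is at most K_t(x; ℓ₁(A₀), ℓ_∞(A₁)), where ℓ₁(A₀) is the space of absolutely summable A₀-valued sequences with norm Σ‖x_i‖_{A₀} and ℓ_∞(A₁) is the space of bounded A₁-valued sequences with the sup norm. -/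
open MeasureTheory ENNReal Set Filter

/-- The Peetre `K_t`-functional of a compatible couple `(A₀, A₁)` of spaces
continuously embedded (via `j₀, j₁`) in a common topological vector space `V`. -/
noncomputable def Kfun {V A₀ A₁ : Type*} [AddCommGroup V] [Module ℝ V]
    [NormedAddCommGroup A₀] [NormedSpace ℝ A₀] [NormedAddCommGroup A₁] [NormedSpace ℝ A₁]
    (j₀ : A₀ →ₗ[ℝ] V) (j₁ : A₁ →ₗ[ℝ] V) (t : ℝ) (v : V) : ℝ :=
  sInf {r | ∃ (a : A₀) (b : A₁), v = j₀ a + j₁ b ∧ r = ‖a‖ + t * ‖b‖}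

/-- The `K_t`-functional of the couple `(ℓ₁(A₀), ℓ_∞(A₁))`, viewed inside the space
of `V`-valued sequences. -/
noncomputable def Kl1linf {V A₀ A₁ : Type*} [AddCommGroup V] [Module ℝ V]
    [NormedAddCommGroup A₀] [NormedSpace ℝ A₀] [NormedAddCommGroup A₁] [NormedSpace ℝ A₁]
    (j₀ : A₀ →ₗ[ℝ] V) (j₁ : A₁ →ₗ[ℝ] V) (t : ℝ) (x : ℕ → V) : ℝ :=
  sInf {r | ∃ (a : ℕ → A₀) (b : ℕ → A₁), Summable (fun i => ‖a i‖) ∧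
      BddAbove (Set.range fun i => ‖b i‖) ∧ (∀ i, x i = j₀ (a i) + j₁ (b i)) ∧
      r = (∑' i, ‖a i‖) + t * (⨆ i, ‖b i‖)}

/-- Membership in `ℓ₁(A₀) + ℓ_∞(A₁)` (as `V`-valued sequences). -/
def MemSumSeq {V A₀ A₁ : Type*} [AddCommGroup V] [Module ℝ V]
    [NormedAddCommGroup A₀] [NormedSpace ℝ A₀] [NormedAddCommGroup A₁] [NormedSpace ℝ A₁]
    (j₀ : A₀ →ₗ[ℝ] V) (j₁ : A₁ →ₗ[ℝ] V) (x : ℕ → V) : Prop :=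
  ∃ (a : ℕ → A₀) (b : ℕ → A₁), Summable (fun i => ‖a i‖) ∧
    BddAbove (Set.range fun i => ‖b i‖) ∧ ∀ i, x i = j₀ (a i) + j₁ (b i)

/-- `sup { Σᵢ K_{tᵢ}(xᵢ) : tᵢ ≥ 0, Σ tᵢ ≤ t }`. -/
noncomputable def KsupSum {V A₀ A₁ : Type*} [AddCommGroup V] [Module ℝ V]
    [NormedAddCommGroup A₀] [NormedSpace ℝ A₀] [NormedAddCommGroup A₁] [NormedSpace ℝ A₁]
    (j₀ : A₀ →ₗ[ℝ] V) (j₁ : A₁ →ₗ[ℝ] V) (t : ℝ) (x : ℕ → V) : ℝ :=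
  sSup {s | ∃ τ : ℕ → ℝ, (∀ i, 0 ≤ τ i) ∧ Summable τ ∧ (∑' i, τ i) ≤ t ∧
      Summable (fun i => Kfun j₀ j₁ (τ i) (x i)) ∧ s = ∑' i, Kfun j₀ j₁ (τ i) (x i)}

/-- Easy direction of Theorem 1: for finitely supported `x`,
`sup { Σᵢ K_{tᵢ}(xᵢ; A₀, A₁) : tᵢ ≥ 0, Σ tᵢ ≤ t } ≤ K_t(x; ℓ₁(A₀), ℓ_∞(A₁))`. -/
theorem KsupSum_le_Kl1linf
    {V A₀ A₁ : Type*} [AddCommGroup V] [Module ℝ V] [TopologicalSpace V]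
    [IsTopologicalAddGroup V] [ContinuousSMul ℝ V] [T2Space V]
    [NormedAddCommGroup A₀] [NormedSpace ℝ A₀] [CompleteSpace A₀]
    [NormedAddCommGroup A₁] [NormedSpace ℝ A₁] [CompleteSpace A₁]
    (j₀ : A₀ →ₗ[ℝ] V) (j₁ : A₁ →ₗ[ℝ] V)
    (hc₀ : Continuous j₀) (hc₁ : Continuous j₁)
    (hi₀ : Function.Injective j₀) (hi₁ : Function.Injective j₁)
    (x : ℕ → V) (hx : ∀ i, x i ∈ LinearMap.range j₀ ⊔ LinearMap.range j₁)
    (hfin : Set.Finite {i | x i ≠ 0}) (t : ℝ) (ht : 0 < t) :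
    KsupSum j₀ j₁ t x ≤ Kl1linf j₀ j₁ t x := by
  classical
  -- decompose each x i
  have hdec : ∀ i, ∃ (a : A₀) (b : A₁), x i = j₀ a + j₁ b := by
    intro i
    obtain ⟨y, hy, z, hz, hyz⟩ := Submodule.mem_sup.mp (hx i)
    obtain ⟨a, rfl⟩ := hy; obtain ⟨b, rfl⟩ := hz
    exact ⟨a, b, hyz.symm⟩
  choose a b hab using hdec
  set a' : ℕ → A₀ := fun i => if x i = 0 then 0 else a i with ha'
  set b' : ℕ → A₁ := fun i => if x i = 0 then 0 else b i with hb'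
  have hab' : ∀ i, x i = j₀ (a' i) + j₁ (b' i) := by
    intro i; by_cases h : x i = 0 <;> simp [a', b', h, ← hab i]
  have hsa' : Summable fun i => ‖a' i‖ := by
    apply summable_of_ne_finset_zero (s := hfin.toFinset)
    intro i hi
    simp only [Set.Finite.mem_toFinset, Set.mem_setOf_eq, not_not] at hi
    simp [a', hi]
  have hbb' : BddAbove (Set.range fun i => ‖b' i‖) := by
    apply Set.Finite.bddAbove
    apply Set.Finite.subset (Set.Finite.insert 0 (hfin.image fun i => ‖b i‖))
    rintro r ⟨i, rfl⟩
    by_cases h : x i = 0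
    · simp [b', h]
    · exact Set.mem_insert_iff.mpr (Or.inr ⟨i, h, by simp [b', h]⟩)
  unfold KsupSum Kl1linf
  apply Real.sSup_le
  · rintro s ⟨τ, hτ0, hτs, hτt, hKs, rfl⟩
    refine le_csInf ⟨(∑' i, ‖a' i‖) + t * (⨆ i, ‖b' i‖), a', b', hsa', hbb', hab', rfl⟩ ?_
    rintro r ⟨A, B, hSA, hBB, hAB, rfl⟩
    set M := ⨆ i, ‖B i‖ with hM
    have hM0 : 0 ≤ M := le_trans (norm_nonneg (B 0)) (le_ciSup hBB 0)
    have hK : ∀ i, Kfun j₀ j₁ (τ i) (x i) ≤ ‖A i‖ + τ i * M := by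
      intro i
      have h1 : Kfun j₀ j₁ (τ i) (x i) ≤ ‖A i‖ + τ i * ‖B i‖ := by
        apply csInf_le
        · refine ⟨0, ?_⟩
          rintro r ⟨u, v, -, rfl⟩
          exact add_nonneg (norm_nonneg _) (mul_nonneg (hτ0 i) (norm_nonneg _))
        · exact ⟨A i, B i, hAB i, rfl⟩
      refine h1.trans (add_le_add_right ?_ _)
      exact mul_le_mul_of_nonneg_left (le_ciSup hBB i) (hτ0 i)
    have hsum2 : Summable fun i => ‖A i‖ + τ i * M := hSA.add (hτs.mul_right M)
    calc (∑' i, Kfun j₀ j₁ (τ i) (x i)) ≤ ∑' i, (‖A i‖ + τ i * M) :=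
          Summable.tsum_le_tsum hK hKs hsum2
      _ = (∑' i, ‖A i‖) + (∑' i, τ i) * M := by
          rw [Summable.tsum_add hSA (hτs.mul_right M), tsum_mul_right]
      _ ≤ (∑' i, ‖A i‖) + t * M := by
          exact add_le_add_right (mul_le_mul_of_nonneg_right hτt hM0) _
  · apply Real.sInf_nonneg
    rintro r ⟨A, B, hSA, hBB, hAB, rfl⟩
    have hM0 : (0:ℝ) ≤ ⨆ i, ‖B i‖ := le_trans (norm_nonneg (B 0)) (le_ciSup hBB 0)
    exact add_nonneg (tsum_nonneg fun i => norm_nonneg _) (mul_nonneg ht.le hM0)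
end

section
/- Let (A₀, A₁) be a compatible couple of Banach spaces and let x = (x_i) be a finitely supported sequence of elements of A₀ + A₁. Then for every t > 0, K_t(x; ℓ₁(A₀), ℓ_∞(A₁)) = sup { Σ_i K_{t_i}(x_i; A₀, A₁) : t_i ≥ 0, Σ_i t_i ≤ t }. -/
open MeasureTheory ENNReal Set Filter

namespace KThmAux

variable {V A₀ A₁ : Type*} [AddCommGroup V] [Module ℝ V]
    [NormedAddCommGroup A₀] [NormedSpace ℝ A₀] [NormedAddCommGroup A₁] [NormedSpace ℝ A₁]
    (j₀ : A₀ →ₗ[ℝ] V) (j₁ : A₁ →ₗ[ℝ] V)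

/-- The `E`-functional. -/
noncomputable def Efun (μ : ℝ) (v : V) : ℝ :=
  sInf {r | ∃ (a : A₀) (b : A₁), v = j₀ a + j₁ b ∧ ‖b‖ ≤ μ ∧ r = ‖a‖}

/-- The minimal possible `‖b‖`. -/
noncomputable def beta (v : V) : ℝ :=
  sInf {r | ∃ (a : A₀) (b : A₁), v = j₀ a + j₁ b ∧ r = ‖b‖}

variable {j₀ j₁}

section K

theorem Kfun_nonneg {t : ℝ} (ht : 0 ≤ t) (v : V) : 0 ≤ Kfun j₀ j₁ t v := by
  apply Real.sInf_nonneg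
  rintro r ⟨a, b, -, rfl⟩
  positivity

theorem Kfun_le {t : ℝ} (ht : 0 ≤ t) {v : V} {a : A₀} {b : A₁} (h : v = j₀ a + j₁ b) :
    Kfun j₀ j₁ t v ≤ ‖a‖ + t * ‖b‖ := by
  refine csInf_le ⟨0, fun r hr => ?_⟩ ⟨a, b, h, rfl⟩
  obtain ⟨a', b', -, rfl⟩ := hr
  positivity

theorem Kfun_zero {t : ℝ} (ht : 0 ≤ t) : Kfun j₀ j₁ t (0 : V) = 0 := by
  refine le_antisymm ?_ (Kfun_nonneg ht 0)
  have := Kfun_le (j₀ := j₀) (j₁ := j₁) ht (v := 0) (a := 0) (b := 0) (by simp)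
  simpa using this

theorem le_Kfun {t c : ℝ} {v : V} (hv : ∃ (a : A₀) (b : A₁), v = j₀ a + j₁ b)
    (h : ∀ (a : A₀) (b : A₁), v = j₀ a + j₁ b → c ≤ ‖a‖ + t * ‖b‖) :
    c ≤ Kfun j₀ j₁ t v := by
  obtain ⟨a, b, hab⟩ := hv
  refine le_csInf ⟨_, a, b, hab, rfl⟩ ?_
  rintro r ⟨a', b', h', rfl⟩
  exact h a' b' h'

end K

section E

theorem beta_nonneg (v : V) : 0 ≤ beta j₀ j₁ v := by
  apply Real.sInf_nonneg; rintro r ⟨a, b, -, rfl⟩; positivity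

theorem beta_le {v : V} {a : A₀} {b : A₁} (h : v = j₀ a + j₁ b) : beta j₀ j₁ v ≤ ‖b‖ := by
  refine csInf_le ⟨0, fun r hr => ?_⟩ ⟨a, b, h, rfl⟩
  obtain ⟨a', b', -, rfl⟩ := hr
  positivity

theorem Efun_nonneg (μ : ℝ) (v : V) : 0 ≤ Efun j₀ j₁ μ v := by
  apply Real.sInf_nonneg; rintro r ⟨a, b, -, -, rfl⟩; positivity

theorem Efun_le {μ : ℝ} {v : V} {a : A₀} {b : A₁} (h : v = j₀ a + j₁ b) (hb : ‖b‖ ≤ μ) :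
    Efun j₀ j₁ μ v ≤ ‖a‖ := by
  refine csInf_le ⟨0, fun r hr => ?_⟩ ⟨a, b, h, hb, rfl⟩
  obtain ⟨a', b', -, -, rfl⟩ := hr
  positivity

/-- existence of a decomposition with `‖b‖ ≤ μ` above `beta`. -/
theorem exists_dec (hv : ∃ (a : A₀) (b : A₁), v = j₀ a + j₁ b) {μ : ℝ} (hμ : beta j₀ j₁ v < μ) :
    ∃ (a : A₀) (b : A₁), v = j₀ a + j₁ b ∧ ‖b‖ ≤ μ := by
  obtain ⟨a, b, hab⟩ := hv
  obtain ⟨r, ⟨a', b', h', rfl⟩, hr⟩ :=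
    exists_lt_of_csInf_lt (s := {r | ∃ (a : A₀) (b : A₁), v = j₀ a + j₁ b ∧ r = ‖b‖})
      ⟨_, a, b, hab, rfl⟩ hμ
  exact ⟨a', b', h', hr.le⟩

theorem exists_dec_Efun_lt {v : V} (hv : ∃ (a : A₀) (b : A₁), v = j₀ a + j₁ b) {μ : ℝ}
    (hμ : beta j₀ j₁ v < μ) {ε : ℝ} (hε : 0 < ε) :
    ∃ (a : A₀) (b : A₁), v = j₀ a + j₁ b ∧ ‖b‖ ≤ μ ∧ ‖a‖ < Efun j₀ j₁ μ v + ε := by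
  obtain ⟨a, b, hab, hbμ⟩ := exists_dec hv hμ
  obtain ⟨r, ⟨a', b', h', hb', rfl⟩, hr⟩ :=
    exists_lt_of_csInf_lt (s := {r | ∃ (a : A₀) (b : A₁), v = j₀ a + j₁ b ∧ ‖b‖ ≤ μ ∧ r = ‖a‖})
      ⟨_, a, b, hab, hbμ, rfl⟩ (by linarith [Efun_nonneg (j₀ := j₀) (j₁ := j₁) μ v] : Efun j₀ j₁ μ v < Efun j₀ j₁ μ v + ε)
  exact ⟨a', b', h', hb', hr⟩

theorem Efun_anti {v : V} (hv : ∃ (a : A₀) (b : A₁), v = j₀ a + j₁ b) {μ μ' : ℝ}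
    (hμ : beta j₀ j₁ v < μ) (h : μ ≤ μ') : Efun j₀ j₁ μ' v ≤ Efun j₀ j₁ μ v := by
  obtain ⟨a, b, hab, hbμ⟩ := exists_dec hv hμ
  refine csInf_le_csInf ⟨0, ?_⟩ ⟨_, a, b, hab, hbμ, rfl⟩ ?_
  · rintro r ⟨a', b', -, -, rfl⟩; positivity
  · rintro r ⟨a', b', h', hb', rfl⟩
    exact ⟨a', b', h', hb'.trans h, rfl⟩

theorem Efun_convexOn {v : V} (hv : ∃ (a : A₀) (b : A₁), v = j₀ a + j₁ b) :
    ConvexOn ℝ (Ioi (beta j₀ j₁ v)) (fun μ => Efun j₀ j₁ μ v) := by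
  refine ⟨convex_Ioi _, ?_⟩
  intro μ hμ μ' hμ' p q hp hq hpq
  rcases eq_or_lt_of_le hp with hp0 | hp0
  · have hq1 : q = 1 := by linarith
    simp only [← hp0, hq1, zero_smul, one_smul, zero_add]
    exact le_refl _
  rcases eq_or_lt_of_le hq with hq0 | hq0
  · have hp1 : p = 1 := by linarith
    simp only [← hq0, hp1, zero_smul, one_smul, add_zero]
    exact le_refl _
  refine le_of_forall_pos_le_add ?_
  intro ε hε
  obtain ⟨a₁, b₁, h₁, hb₁, ha₁⟩ := exists_dec_Efun_lt hv hμ hε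
  obtain ⟨a₂, b₂, h₂, hb₂, ha₂⟩ := exists_dec_Efun_lt hv hμ' hε
  have hdec : v = j₀ (p • a₁ + q • a₂) + j₁ (p • b₁ + q • b₂) := by
    have : v = (p + q) • v := by rw [hpq, one_smul]
    calc v = (p + q) • v := this
    _ = p • (j₀ a₁ + j₁ b₁) + q • (j₀ a₂ + j₁ b₂) := by
        rw [add_smul, ← h₁, ← h₂]
    _ = j₀ (p • a₁ + q • a₂) + j₁ (p • b₁ + q • b₂) := by
        simp only [map_add, _root_.map_smul, smul_add]; abel
  have hbb : ‖p • b₁ + q • b₂‖ ≤ p • μ + q • μ' := by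
    calc ‖p • b₁ + q • b₂‖ ≤ ‖p • b₁‖ + ‖q • b₂‖ := norm_add_le _ _
    _ = p * ‖b₁‖ + q * ‖b₂‖ := by
        rw [norm_smul, norm_smul, Real.norm_of_nonneg hp, Real.norm_of_nonneg hq]
    _ ≤ p * μ + q * μ' := by
        gcongr
    _ = p • μ + q • μ' := by simp [smul_eq_mul]
  calc Efun j₀ j₁ (p • μ + q • μ') v ≤ ‖p • a₁ + q • a₂‖ := Efun_le hdec hbb
  _ ≤ p * ‖a₁‖ + q * ‖a₂‖ := by
      refine (norm_add_le _ _).trans ?_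
      rw [norm_smul, norm_smul, Real.norm_of_nonneg hp, Real.norm_of_nonneg hq]
  _ ≤ p * (Efun j₀ j₁ μ v + ε) + q * (Efun j₀ j₁ μ' v + ε) := by gcongr
  _ = p * Efun j₀ j₁ μ v + q * Efun j₀ j₁ μ' v + (p * ε + q * ε) := by ring
  _ = p * Efun j₀ j₁ μ v + q * Efun j₀ j₁ μ' v + ε := by rw [← add_mul, hpq, one_mul]
  _ = p • Efun j₀ j₁ μ v + q • Efun j₀ j₁ μ' v + ε := by simp [smul_eq_mul]

end E

section LD

variable (j₀ j₁)

/-- Slope of `Efun · v` between `a` and `y`. -/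
noncomputable def sl (a y : ℝ) (v : V) : ℝ := (Efun j₀ j₁ y v - Efun j₀ j₁ a v) / (y - a)

/-- Left derivative (as a sup of slopes) of `Efun · v` at `μ`. -/
noncomputable def Ld (μ : ℝ) (v : V) : ℝ :=
  sSup ((fun ρ => sl j₀ j₁ μ ρ v) '' Ioo (beta j₀ j₁ v) μ)

/-- Right derivative (as an inf of slopes) of `Efun · v` at `μ`. -/
noncomputable def Rd (μ : ℝ) (v : V) : ℝ :=
  sInf ((fun σ => sl j₀ j₁ μ σ v) '' Ioi μ)

variable {j₀ j₁}

theorem sl_mono {v : V} (hv : ∃ (a : A₀) (b : A₁), v = j₀ a + j₁ b) {a y y' : ℝ}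
    (ha : beta j₀ j₁ v < a) (hy : beta j₀ j₁ v < y) (hy' : beta j₀ j₁ v < y')
    (hya : y ≠ a) (hy'a : y' ≠ a) (hyy' : y ≤ y') : sl j₀ j₁ a y v ≤ sl j₀ j₁ a y' v :=
  (Efun_convexOn hv).secant_mono ha hy hy' hya hy'a hyy'

theorem sl_left_le_right {v : V} (hv : ∃ (a : A₀) (b : A₁), v = j₀ a + j₁ b) {ρ μ σ : ℝ}
    (hρ : beta j₀ j₁ v < ρ) (hρμ : ρ < μ) (hμσ : μ < σ) :
    sl j₀ j₁ μ ρ v ≤ sl j₀ j₁ μ σ v :=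
  sl_mono hv (hρ.trans hρμ) hρ (hρ.trans (hρμ.trans hμσ)) hρμ.ne (hμσ.ne')
    (hρμ.trans hμσ).le

theorem sl_nonpos {v : V} (hv : ∃ (a : A₀) (b : A₁), v = j₀ a + j₁ b) {μ σ : ℝ}
    (hμ : beta j₀ j₁ v < μ) (hμσ : μ < σ) : sl j₀ j₁ μ σ v ≤ 0 := by
  have h := Efun_anti hv hμ hμσ.le
  have hd : (0:ℝ) < σ - μ := by linarith
  unfold sl
  apply div_nonpos_of_nonpos_of_nonneg <;> linarith

theorem bddAbove_Lset {v : V} (hv : ∃ (a : A₀) (b : A₁), v = j₀ a + j₁ b) {μ : ℝ}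
    (hμ : beta j₀ j₁ v < μ) :
    BddAbove ((fun ρ => sl j₀ j₁ μ ρ v) '' Ioo (beta j₀ j₁ v) μ) := by
  refine ⟨sl j₀ j₁ μ (μ + 1) v, ?_⟩
  rintro r ⟨ρ, hρ, rfl⟩
  exact sl_left_le_right hv hρ.1 hρ.2 (by linarith)

theorem Lset_nonempty {v : V} {μ : ℝ} (hμ : beta j₀ j₁ v < μ) :
    ((fun ρ => sl j₀ j₁ μ ρ v) '' Ioo (beta j₀ j₁ v) μ).Nonempty :=
  ⟨_, ⟨(beta j₀ j₁ v + μ) / 2, ⟨by linarith, by linarith⟩, rfl⟩⟩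

theorem bddBelow_Rset {v : V} (hv : ∃ (a : A₀) (b : A₁), v = j₀ a + j₁ b) {μ : ℝ}
    (hμ : beta j₀ j₁ v < μ) :
    BddBelow ((fun σ => sl j₀ j₁ μ σ v) '' Ioi μ) := by
  refine ⟨sl j₀ j₁ μ ((beta j₀ j₁ v + μ) / 2) v, ?_⟩
  rintro r ⟨σ, hσ, rfl⟩
  exact sl_left_le_right hv (by linarith) (by linarith) hσ

theorem Rset_nonempty {v : V} {μ : ℝ} :
    ((fun σ => sl j₀ j₁ μ σ v) '' Ioi μ).Nonempty :=
  ⟨_, ⟨μ + 1, by simp, rfl⟩⟩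

theorem sl_le_Ld {v : V} (hv : ∃ (a : A₀) (b : A₁), v = j₀ a + j₁ b) {ρ μ : ℝ}
    (hρ : beta j₀ j₁ v < ρ) (hρμ : ρ < μ) : sl j₀ j₁ μ ρ v ≤ Ld j₀ j₁ μ v :=
  le_csSup (bddAbove_Lset hv (hρ.trans hρμ)) ⟨ρ, ⟨hρ, hρμ⟩, rfl⟩

theorem Ld_le_sl {v : V} (hv : ∃ (a : A₀) (b : A₁), v = j₀ a + j₁ b) {μ σ : ℝ}
    (hμ : beta j₀ j₁ v < μ) (hμσ : μ < σ) : Ld j₀ j₁ μ v ≤ sl j₀ j₁ μ σ v := by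
  refine csSup_le (Lset_nonempty hμ) ?_
  rintro r ⟨ρ, hρ, rfl⟩
  exact sl_left_le_right hv hρ.1 hρ.2 hμσ

theorem Rd_le_sl {v : V} (hv : ∃ (a : A₀) (b : A₁), v = j₀ a + j₁ b) {μ σ : ℝ}
    (hμ : beta j₀ j₁ v < μ) (hμσ : μ < σ) : Rd j₀ j₁ μ v ≤ sl j₀ j₁ μ σ v :=
  csInf_le (bddBelow_Rset hv hμ) ⟨σ, hμσ, rfl⟩

theorem sl_le_Rd {v : V} (hv : ∃ (a : A₀) (b : A₁), v = j₀ a + j₁ b) {ρ μ : ℝ}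
    (hρ : beta j₀ j₁ v < ρ) (hρμ : ρ < μ) : sl j₀ j₁ μ ρ v ≤ Rd j₀ j₁ μ v := by
  refine le_csInf Rset_nonempty ?_
  rintro r ⟨σ, hσ, rfl⟩
  exact sl_left_le_right hv hρ hρμ hσ

theorem Ld_le_Rd {v : V} (hv : ∃ (a : A₀) (b : A₁), v = j₀ a + j₁ b) {μ : ℝ}
    (hμ : beta j₀ j₁ v < μ) : Ld j₀ j₁ μ v ≤ Rd j₀ j₁ μ v := by
  refine csSup_le (Lset_nonempty hμ) ?_
  rintro r ⟨ρ, hρ, rfl⟩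
  exact sl_le_Rd hv hρ.1 hρ.2

theorem Rd_nonpos {v : V} (hv : ∃ (a : A₀) (b : A₁), v = j₀ a + j₁ b) {μ : ℝ}
    (hμ : beta j₀ j₁ v < μ) : Rd j₀ j₁ μ v ≤ 0 :=
  (Rd_le_sl hv hμ (by linarith : μ < μ + 1)).trans (sl_nonpos hv hμ (by linarith))

theorem Ld_nonpos {v : V} (hv : ∃ (a : A₀) (b : A₁), v = j₀ a + j₁ b) {μ : ℝ}
    (hμ : beta j₀ j₁ v < μ) : Ld j₀ j₁ μ v ≤ 0 :=
  (Ld_le_Rd hv hμ).trans (Rd_nonpos hv hμ)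

/-- the subgradient inequality. -/
theorem subgrad {v : V} (hv : ∃ (a : A₀) (b : A₁), v = j₀ a + j₁ b) {μ s w : ℝ}
    (hμ : beta j₀ j₁ v < μ) (hsL : Ld j₀ j₁ μ v ≤ s) (hsR : s ≤ Rd j₀ j₁ μ v)
    (hw : beta j₀ j₁ v < w) :
    Efun j₀ j₁ μ v + s * (w - μ) ≤ Efun j₀ j₁ w v := by
  rcases lt_trichotomy w μ with h | h | h
  · have h1 : sl j₀ j₁ μ w v ≤ s := (sl_le_Ld hv hw h).trans hsL
    have hd : w - μ < 0 := by linarith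
    unfold sl at h1
    rw [div_le_iff_of_neg hd] at h1
    linarith
  · subst h; simp
  · have h1 : s ≤ sl j₀ j₁ μ w v := hsR.trans (Rd_le_sl hv hμ h)
    have hd : (0:ℝ) < w - μ := by linarith
    unfold sl at h1
    rw [le_div_iff₀ hd] at h1
    linarith

/-- The key lower bound for the `K`-functional in terms of `Efun` data at `μ`. -/
theorem key_K {v : V} (hv : ∃ (a : A₀) (b : A₁), v = j₀ a + j₁ b) {μ s e : ℝ}
    (hμ : beta j₀ j₁ v < μ) (hsL : Ld j₀ j₁ μ v ≤ s) (hsR : s ≤ Rd j₀ j₁ μ v)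
    (he : 0 ≤ e) :
    Efun j₀ j₁ μ v + (-s) * μ + e * beta j₀ j₁ v ≤ Kfun j₀ j₁ (-s + e) v := by
  have hs0 : s ≤ 0 := hsR.trans (Rd_nonpos hv hμ)
  refine le_Kfun hv ?_
  intro a b hdec
  have hβb : beta j₀ j₁ v ≤ ‖b‖ := beta_le hdec
  have main : Efun j₀ j₁ μ v + (-s) * μ ≤ ‖a‖ + (-s) * ‖b‖ := by
    refine le_of_forall_pos_le_add ?_
    intro ε hε
    set δ := ε / (1 - s) with hδdef
    have h1s : (0:ℝ) < 1 - s := by linarith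
    have hδ : 0 < δ := div_pos hε h1s
    have hw : beta j₀ j₁ v < ‖b‖ + δ := by linarith
    have hE1 : Efun j₀ j₁ (‖b‖ + δ) v ≤ ‖a‖ := Efun_le hdec (by linarith)
    have hE2 := subgrad hv hμ hsL hsR hw
    have hsδ : (-s) * δ ≤ ε := by
      have heq : (-s) * δ = (-s) / (1 - s) * ε := by rw [hδdef]; ring
      have hle : (-s) / (1 - s) ≤ 1 := by rw [div_le_one h1s]; linarith
      have h0 : 0 ≤ (-s) / (1 - s) := div_nonneg (by linarith) h1s.le
      rw [heq]
      nlinarith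
    nlinarith [hE2.trans hE1]
  have h2 : e * beta j₀ j₁ v ≤ e * ‖b‖ := mul_le_mul_of_nonneg_left hβb he
  have hrw : ‖a‖ + (-s) * ‖b‖ + e * ‖b‖ = ‖a‖ + (-s + e) * ‖b‖ := by ring
  linarith

end LD

end KThmAux

set_option maxHeartbeats 2000000 in
open KThmAux in
/-- Theorem 1: for finitely supported `x`,
`K_t(x; ℓ₁(A₀), ℓ_∞(A₁)) = sup { Σᵢ K_{tᵢ}(xᵢ; A₀, A₁) : tᵢ ≥ 0, Σ tᵢ ≤ t }`. -/
theorem Kl1linf_eq_KsupSum_of_finiteSupport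
    {V A₀ A₁ : Type*} [AddCommGroup V] [Module ℝ V] [TopologicalSpace V]
    [IsTopologicalAddGroup V] [ContinuousSMul ℝ V] [T2Space V]
    [NormedAddCommGroup A₀] [NormedSpace ℝ A₀] [CompleteSpace A₀]
    [NormedAddCommGroup A₁] [NormedSpace ℝ A₁] [CompleteSpace A₁]
    (j₀ : A₀ →ₗ[ℝ] V) (j₁ : A₁ →ₗ[ℝ] V)
    (hc₀ : Continuous j₀) (hc₁ : Continuous j₁)
    (hi₀ : Function.Injective j₀) (hi₁ : Function.Injective j₁)
    (x : ℕ → V) (hx : ∀ i, x i ∈ LinearMap.range j₀ ⊔ LinearMap.range j₁)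
    (hfin : Set.Finite {i | x i ≠ 0}) (t : ℝ) (ht : 0 < t) :
    Kl1linf j₀ j₁ t x = KsupSum j₀ j₁ t x := by
  classical
  unfold Kl1linf KsupSum
  set KS := {r | ∃ (a : ℕ → A₀) (b : ℕ → A₁), Summable (fun i => ‖a i‖) ∧
      BddAbove (Set.range fun i => ‖b i‖) ∧ (∀ i, x i = j₀ (a i) + j₁ (b i)) ∧
      r = (∑' i, ‖a i‖) + t * (⨆ i, ‖b i‖)} with hKSdef
  set SS := {s | ∃ τ : ℕ → ℝ, (∀ i, 0 ≤ τ i) ∧ Summable τ ∧ (∑' i, τ i) ≤ t ∧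
      Summable (fun i => Kfun j₀ j₁ (τ i) (x i)) ∧ s = ∑' i, Kfun j₀ j₁ (τ i) (x i)} with hSSdef
  have hxdec : ∀ i, ∃ (a : A₀) (b : A₁), x i = j₀ a + j₁ b := by
    intro i
    obtain ⟨y, ⟨a, rfl⟩, z, ⟨b, rfl⟩, h⟩ := Submodule.mem_sup.mp (hx i)
    exact ⟨a, b, h.symm⟩
  set F := hfin.toFinset with hFdef
  have hxF : ∀ i ∉ F, x i = 0 := by
    intro i hi
    by_contra h
    exact hi (hfin.mem_toFinset.mpr h)
  -- every element of SS is below every element of KS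
  have s_le_r : ∀ s ∈ SS, ∀ r ∈ KS, s ≤ r := by
    rintro s ⟨τ, hτ0, hτsum, hτle, hKsum, rfl⟩ r ⟨a, b, hasum, hbdd, hdec, rfl⟩
    have hB : ∀ i, ‖b i‖ ≤ ⨆ i, ‖b i‖ := fun i => le_ciSup hbdd i
    have hB0 : (0:ℝ) ≤ ⨆ i, ‖b i‖ := (norm_nonneg (b 0)).trans (hB 0)
    have hτB : Summable (fun i => τ i * ⨆ i, ‖b i‖) := hτsum.mul_right _
    have h1 : ∀ i, Kfun j₀ j₁ (τ i) (x i) ≤ ‖a i‖ + τ i * ⨆ i, ‖b i‖ := by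
      intro i
      refine (Kfun_le (hτ0 i) (hdec i)).trans ?_
      exact add_le_add_right (mul_le_mul_of_nonneg_left (hB i) (hτ0 i)) _
    calc (∑' i, Kfun j₀ j₁ (τ i) (x i)) ≤ ∑' i, (‖a i‖ + τ i * ⨆ i, ‖b i‖) :=
          Summable.tsum_le_tsum h1 hKsum (hasum.add hτB)
      _ = (∑' i, ‖a i‖) + ∑' i, (τ i * ⨆ i, ‖b i‖) := Summable.tsum_add hasum hτB
      _ = (∑' i, ‖a i‖) + (∑' i, τ i) * ⨆ i, ‖b i‖ := by rw [tsum_mul_right]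
      _ ≤ (∑' i, ‖a i‖) + t * ⨆ i, ‖b i‖ := by
          gcongr
  have KSne : KS.Nonempty := by
    choose a0 b0 hab0 using hxdec
    refine ⟨_, fun i => if i ∈ F then a0 i else 0, fun i => if i ∈ F then b0 i else 0,
      summable_of_ne_finset_zero (s := F) ?_, ?_, ?_, rfl⟩
    · intro i hi; simp [if_neg hi]
    · refine ⟨∑ i ∈ F, ‖b0 i‖, ?_⟩
      rintro r ⟨i, rfl⟩
      by_cases hi : i ∈ F
      · simp only [if_pos hi]
        exact Finset.single_le_sum (fun j _ => norm_nonneg (b0 j)) hi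
      · simp only [if_neg hi, norm_zero]
        exact Finset.sum_nonneg fun j _ => norm_nonneg (b0 j)
    · intro i
      by_cases hi : i ∈ F
      · simp only [if_pos hi]; exact hab0 i
      · simp only [if_neg hi, map_zero, add_zero, hxF i hi]
  have SSne : SS.Nonempty := by
    refine ⟨_, 0, fun i => le_refl 0, summable_zero, by simp [ht.le], ?_, rfl⟩
    refine summable_of_ne_finset_zero (s := F) ?_
    intro i hi
    simp only [Pi.zero_apply, hxF i hi]
    exact Kfun_zero (le_refl 0)
  have SSbdd : BddAbove SS := by
    obtain ⟨r, hr⟩ := KSne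
    exact ⟨r, fun s hs => s_le_r s hs r hr⟩
  have KSbdd : BddBelow KS := by
    refine ⟨0, ?_⟩
    rintro r ⟨a, b, hasum, hbdd, hdec, rfl⟩
    have hB0 : (0:ℝ) ≤ ⨆ i, ‖b i‖ := (norm_nonneg (b 0)).trans (le_ciSup hbdd 0)
    have : (0:ℝ) ≤ ∑' i, ‖a i‖ := tsum_nonneg (fun i => norm_nonneg (a i))
    positivity
  have easy : sSup SS ≤ sInf KS :=
    le_csInf KSne fun r hr => csSup_le SSne fun s hs => s_le_r s hs r hr
  refine le_antisymm ?_ easy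
  by_cases hF : F.Nonempty
  swap
  · -- all x i = 0
    have hx0 : ∀ i, x i = 0 := by
      intro i
      refine hxF i ?_
      rw [Finset.not_nonempty_iff_eq_empty] at hF
      simp [hF]
    have h0KS : (0:ℝ) ∈ KS := by
      refine ⟨0, 0, by simpa using (summable_zero : Summable fun _ : ℕ => (0:ℝ)), by simp [Set.range_const], fun i => by simp [hx0 i], ?_⟩
      simp [ciSup_const]
    have h0SS : (0:ℝ) ∈ SS := by
      have hK00 : (fun i => Kfun j₀ j₁ ((0:ℕ → ℝ) i) (x i)) = fun _ => (0:ℝ) := by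
        funext i
        simp only [Pi.zero_apply, hx0 i]
        exact Kfun_zero (le_refl 0)
      refine ⟨0, fun i => le_refl 0, summable_zero, by simp [ht.le], ?_, ?_⟩
      · rw [hK00]; exact summable_zero
      · rw [hK00, tsum_zero]
    exact (csInf_le KSbdd h0KS).trans (le_csSup SSbdd h0SS)
  · -- main case : F nonempty
    set β : ℕ → ℝ := fun i => beta j₀ j₁ (x i) with hβdef
    set E : ℕ → ℝ → ℝ := fun i μ => Efun j₀ j₁ μ (x i) with hEdef
    set lam0 : ℝ := F.sup' hF β with hlam0def
    obtain ⟨istar, histarF, histar⟩ := F.exists_mem_eq_sup' hF β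
    have hβlam0 : ∀ i ∈ F, β i ≤ lam0 := fun i hi => Finset.le_sup' β hi
    have hlam0_nonneg : (0:ℝ) ≤ lam0 := by
      rw [hlam0def, histar]
      exact beta_nonneg (x istar)
    have hβlt : ∀ i ∈ F, ∀ {μ : ℝ}, lam0 < μ → β i < μ :=
      fun i hi _ h => (hβlam0 i hi).trans_lt h
    set L : ℕ → ℝ → ℝ := fun i μ => Ld j₀ j₁ μ (x i) with hLdef
    set R : ℕ → ℝ → ℝ := fun i μ => Rd j₀ j₁ μ (x i) with hRdef
    set ψ : ℝ → ℝ := fun μ => ∑ i ∈ F, E i μ with hψdef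
    set Lψ : ℝ → ℝ := fun μ => ∑ i ∈ F, L i μ with hLψdef
    have hψ_nonneg : ∀ μ, 0 ≤ ψ μ := fun μ =>
      Finset.sum_nonneg fun i _ => Efun_nonneg μ (x i)
    have hψ_anti : ∀ {μ μ' : ℝ}, lam0 < μ → μ ≤ μ' → ψ μ' ≤ ψ μ := by
      intro μ μ' hμ hμ'
      exact Finset.sum_le_sum fun i hi => Efun_anti (hxdec i) (hβlt i hi hμ) hμ'
    have KUB : ∀ μ, lam0 < μ → ∀ ε > 0, sInf KS ≤ ψ μ + t * μ + ε := by
      intro μ hμ ε hε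
      have hn : (0:ℝ) < (F.card : ℝ) := by
        exact_mod_cast Finset.card_pos.mpr hF
      have hεn : (0:ℝ) < ε / F.card := by positivity
      have hch : ∀ i, ∃ p : A₀ × A₁, x i = j₀ p.1 + j₁ p.2 ∧ ‖p.2‖ ≤ μ ∧
          (i ∈ F → ‖p.1‖ < E i μ + ε / F.card) ∧ (i ∉ F → ‖p.1‖ = 0) := by
        intro i
        by_cases hi : i ∈ F
        · obtain ⟨a, b, hab, hb, ha⟩ :=
            exists_dec_Efun_lt (hxdec i) (hβlt i hi hμ) hεn
          exact ⟨(a, b), hab, hb, fun _ => ha, fun h => absurd hi h⟩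
        · refine ⟨(0, 0), ?_, ?_, fun h => absurd h hi, fun _ => norm_zero⟩
          · simp [hxF i hi]
          · simp only [norm_zero]
            linarith
      choose p hp1 hp2 hp3 hp4 using hch
      have hbdd : BddAbove (Set.range fun i => ‖(p i).2‖) := by
        refine ⟨μ, ?_⟩
        rintro r ⟨i, rfl⟩
        exact hp2 i
      have ha0 : ∀ i ∉ F, ‖(p i).1‖ = 0 := fun i hi => hp4 i hi
      have hasum : Summable (fun i => ‖(p i).1‖) := summable_of_ne_finset_zero ha0
      have hmem : ((∑' i, ‖(p i).1‖) + t * ⨆ i, ‖(p i).2‖) ∈ KS :=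
        ⟨fun i => (p i).1, fun i => (p i).2, hasum, hbdd, hp1, rfl⟩
      refine (csInf_le KSbdd hmem).trans ?_
      have h1 : (∑' i, ‖(p i).1‖) ≤ ψ μ + ε := by
        rw [tsum_eq_sum ha0]
        calc (∑ i ∈ F, ‖(p i).1‖) ≤ ∑ i ∈ F, (E i μ + ε / F.card) :=
              Finset.sum_le_sum fun i hi => (hp3 i hi).le
          _ = (∑ i ∈ F, E i μ) + F.card * (ε / F.card) := by
              rw [Finset.sum_add_distrib, Finset.sum_const, nsmul_eq_mul]
          _ = ψ μ + ε := by
              rw [show ψ μ = ∑ i ∈ F, E i μ from rfl]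
              congr 1
              field_simp
      have h2 : t * (⨆ i, ‖(p i).2‖) ≤ t * μ :=
        mul_le_mul_of_nonneg_left (ciSup_le fun i => hp2 i) ht.le
      linarith
    have SBOUND : ∀ ν : ℕ → ℝ, (∀ i ∈ F, 0 ≤ ν i) → (∑ i ∈ F, ν i) ≤ t →
        (∑ i ∈ F, Kfun j₀ j₁ (ν i) (x i)) ≤ sSup SS := by
      intro ν hν0 hνt
      set τ : ℕ → ℝ := fun i => if i ∈ F then ν i else 0 with hτdef
      have hτ0 : ∀ i, 0 ≤ τ i := by
        intro i
        rw [hτdef]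
        by_cases hi : i ∈ F
        · simp only [if_pos hi]; exact hν0 i hi
        · simp [if_neg hi]
      have hτz : ∀ i ∉ F, τ i = 0 := by
        intro i hi; rw [hτdef]; simp [if_neg hi]
      have hτsum : Summable τ := summable_of_ne_finset_zero hτz
      have hτF : ∀ i ∈ F, τ i = ν i := by
        intro i hi; rw [hτdef]; simp [if_pos hi]
      have htsumτ : (∑' i, τ i) ≤ t := by
        rw [tsum_eq_sum hτz, Finset.sum_congr rfl hτF]
        exact hνt
      have hK0 : ∀ i ∉ F, Kfun j₀ j₁ (τ i) (x i) = 0 := by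
        intro i hi
        rw [hτz i hi, hxF i hi]
        exact Kfun_zero (le_refl 0)
      have hKsum : Summable (fun i => Kfun j₀ j₁ (τ i) (x i)) :=
        summable_of_ne_finset_zero hK0
      have hmem : (∑' i, Kfun j₀ j₁ (τ i) (x i)) ∈ SS := ⟨τ, hτ0, hτsum, htsumτ, hKsum, rfl⟩
      calc (∑ i ∈ F, Kfun j₀ j₁ (ν i) (x i))
          = ∑' i, Kfun j₀ j₁ (τ i) (x i) := by
            rw [tsum_eq_sum hK0]
            exact (Finset.sum_congr rfl (fun i hi => by rw [hτF i hi])).symm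
        _ ≤ sSup SS := le_csSup SSbdd hmem
    have SLB : ∀ μ, lam0 < μ → ∀ (s : ℕ → ℝ) (e : ℝ), 0 ≤ e →
        (∀ i ∈ F, L i μ ≤ s i ∧ s i ≤ R i μ) → (∑ i ∈ F, (-(s i))) + e ≤ t →
        (∑ i ∈ F, (E i μ + (-(s i)) * μ)) + e * lam0 ≤ sSup SS := by
      intro μ hμ s e he hs hsum
      set ν : ℕ → ℝ := fun i => -(s i) + (if i = istar then e else 0) with hνdef
      have hν0 : ∀ i ∈ F, 0 ≤ ν i := by
        intro i hi
        have h1 : s i ≤ 0 := (hs i hi).2.trans (Rd_nonpos (hxdec i) (hβlt i hi hμ))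
        rw [hνdef]
        simp only
        by_cases hie : i = istar
        · simp only [if_pos hie]; linarith
        · simp only [if_neg hie]; linarith
      have hνsum : (∑ i ∈ F, ν i) = (∑ i ∈ F, (-(s i))) + e := by
        rw [hνdef]
        simp only
        rw [Finset.sum_add_distrib]
        congr 1
        rw [Finset.sum_ite_eq' F istar (fun _ => e)]
        simp [histarF]
      have hkey : ∀ i ∈ F, E i μ + (-(s i)) * μ + (if i = istar then e * lam0 else 0)
          ≤ Kfun j₀ j₁ (ν i) (x i) := by
        intro i hi
        by_cases hie : i = istar
        · subst hie
          have hνi : ν i = -(s i) + e := by rw [hνdef]; simp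
          rw [if_pos rfl, hνi]
          have := key_K (hxdec i) (hβlt i hi hμ) (hs i hi).1 (hs i hi).2 he
          have hβi : beta j₀ j₁ (x i) = lam0 := by
            rw [hlam0def, histar]
          rw [hβi] at this
          exact this
        · have hνi : ν i = -(s i) + 0 := by rw [hνdef]; simp [hie]
          rw [if_neg hie, hνi]
          have hthis := key_K (hxdec i) (hβlt i hi hμ) (hs i hi).1 (hs i hi).2 (le_refl 0)
          have heq : Efun j₀ j₁ μ (x i) + (-(s i)) * μ + 0 * beta j₀ j₁ (x i)
              = E i μ + (-(s i)) * μ + 0 := by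
            show Efun j₀ j₁ μ (x i) + (-(s i)) * μ + 0 * beta j₀ j₁ (x i)
              = Efun j₀ j₁ μ (x i) + (-(s i)) * μ + 0
            ring
          rw [heq] at hthis
          exact hthis
      have hsum2 : (∑ i ∈ F, (E i μ + (-(s i)) * μ)) + e * lam0
          = ∑ i ∈ F, (E i μ + (-(s i)) * μ + (if i = istar then e * lam0 else 0)) := by
        have h1 : ∑ i ∈ F, (E i μ + (-(s i)) * μ + (if i = istar then e * lam0 else 0))
            = (∑ i ∈ F, (E i μ + (-(s i)) * μ)) + ∑ i ∈ F, (if i = istar then e * lam0 else 0) :=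
          Finset.sum_add_distrib
        rw [h1, Finset.sum_ite_eq' F istar (fun _ => e * lam0), if_pos histarF]
      rw [hsum2]
      calc (∑ i ∈ F, (E i μ + (-(s i)) * μ + (if i = istar then e * lam0 else 0)))
          ≤ ∑ i ∈ F, Kfun j₀ j₁ (ν i) (x i) := Finset.sum_le_sum hkey
        _ ≤ sSup SS := SBOUND ν hν0 (le_of_eq_of_le hνsum hsum)
    -- the region where the left derivative of ψ exceeds -t
    obtain ⟨R2, hR2mem⟩ : ∃ R2 : Set ℝ, ∀ μ : ℝ, μ ∈ R2 ↔ (lam0 < μ ∧ -t < Lψ μ) :=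
      ⟨{μ | lam0 < μ ∧ -t < Lψ μ}, fun μ => Iff.rfl⟩
    have hLup : ∀ {μ μ' : ℝ}, lam0 < μ → μ < μ' → ∀ i ∈ F, L i μ ≤ L i μ' := by
      intro μ μ' hμ hμ' i hi
      have h1 : L i μ ≤ sl j₀ j₁ μ μ' (x i) := Ld_le_sl (hxdec i) (hβlt i hi hμ) hμ'
      have h2 : sl j₀ j₁ μ μ' (x i) = sl j₀ j₁ μ' μ (x i) := by
        unfold KThmAux.sl
        rw [← neg_div_neg_eq]
        ring_nf
      rw [h2] at h1
      exact h1.trans (sl_le_Ld (hxdec i) (hβlt i hi hμ) hμ')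
    have R2up : ∀ {μ μ' : ℝ}, μ ∈ R2 → μ < μ' → μ' ∈ R2 := by
      intro μ μ' hμR hμ'
      rw [hR2mem] at hμR ⊢
      refine ⟨hμR.1.trans hμ', lt_of_lt_of_le hμR.2 ?_⟩
      exact Finset.sum_le_sum (fun i hi => hLup hμR.1 hμ' i hi)
    have R2ne : R2.Nonempty := by
      by_contra hne
      push_neg at hne
      have hall : ∀ μ, lam0 < μ → Lψ μ ≤ -t := by
        intro μ hμ
        by_contra h
        push_neg at h
        have hmem : μ ∈ R2 := (hR2mem μ).mpr ⟨hμ, h⟩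
        rw [hne] at hmem
        exact hmem
      set ρ := lam0 + 1 with hρdef
      have hρ : lam0 < ρ := by rw [hρdef]; linarith
      set μ := ρ + (ψ ρ + 1) / t with hμdef
      have hρμ : ρ < μ := by
        have : 0 < (ψ ρ + 1) / t := by
          have := hψ_nonneg ρ
          positivity
        rw [hμdef]; linarith
      have hμlam : lam0 < μ := hρ.trans hρμ
      have hstep : ∀ i ∈ F, E i μ - E i ρ ≤ L i μ * (μ - ρ) := by
        intro i hi
        have h1 : sl j₀ j₁ μ ρ (x i) ≤ L i μ :=
          sl_le_Ld (hxdec i) (hβlt i hi hρ) hρμ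
        have h2 : sl j₀ j₁ μ ρ (x i) = (E i ρ - E i μ) / (ρ - μ) := rfl
        rw [h2, div_le_iff_of_neg (by linarith : ρ - μ < 0)] at h1
        nlinarith [h1]
      have hsum : ψ μ - ψ ρ ≤ Lψ μ * (μ - ρ) := by
        have := Finset.sum_le_sum hstep
        rw [Finset.sum_sub_distrib, ← Finset.sum_mul] at this
        exact this
      have h3 : Lψ μ * (μ - ρ) ≤ -t * (μ - ρ) :=
        mul_le_mul_of_nonneg_right (hall μ hμlam) (by linarith)
      have h4 : -t * (μ - ρ) = -(ψ ρ + 1) := by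
        rw [hμdef]
        field_simp
        ring
      have h5 := hψ_nonneg μ
      linarith
    have R2bdd : BddBelow R2 := ⟨lam0, fun μ hμ => ((hR2mem μ).mp hμ).1.le⟩
    set c : ℝ := sInf R2 with hcdef
    have hc_lb : lam0 ≤ c := le_csInf R2ne fun μ hμ => ((hR2mem μ).mp hμ).1.le
    have hLψ_nonpos : ∀ {μ : ℝ}, lam0 < μ → Lψ μ ≤ 0 := by
      intro μ hμ
      exact Finset.sum_nonpos fun i hi => Ld_nonpos (hxdec i) (hβlt i hi hμ)
    rcases eq_or_lt_of_le hc_lb with hcA | hcB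
    · -- Case A : c = lam0
      have hR2all : ∀ μ, lam0 < μ → μ ∈ R2 := by
        intro μ hμ
        obtain ⟨ρ, hρR2, hρμ⟩ := exists_lt_of_csInf_lt R2ne (by rw [← hcdef, ← hcA]; exact hμ)
        exact R2up hρR2 hρμ
      refine le_of_forall_pos_le_add ?_
      intro ε hε
      have hμgt : (0:ℝ) < ε / (2 * t) := by positivity
      set μ := lam0 + ε / (2 * t) with hμdef
      have hμ : lam0 < μ := by rw [hμdef]; linarith
      have hμR2 := (hR2mem μ).mp (hR2all μ hμ)
      set e := t + Lψ μ with hedef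
      have he : 0 ≤ e := by
        have h2 := hμR2.2
        rw [hedef]
        linarith
      have hLμ0 : Lψ μ ≤ 0 := hLψ_nonpos hμ
      have hsum1 : (∑ i ∈ F, (-(L i μ))) + e ≤ t := by
        have h1 : (∑ i ∈ F, (-(L i μ))) = -Lψ μ := by
          rw [show Lψ μ = ∑ i ∈ F, L i μ from rfl]; exact Finset.sum_neg_distrib _
        rw [h1, hedef]; ring_nf; exact le_refl _
      have hval : (∑ i ∈ F, (E i μ + (-(L i μ)) * μ)) + e * lam0 ≤ sSup SS :=
        SLB μ hμ (fun i => L i μ) e he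
          (fun i hi => ⟨le_refl _, Ld_le_Rd (hxdec i) (hβlt i hi hμ)⟩) hsum1
      have hψeq : ψ μ = ∑ i ∈ F, E i μ := rfl
      have hLψeq : Lψ μ = ∑ i ∈ F, L i μ := rfl
      have hexp : (∑ i ∈ F, (E i μ + (-(L i μ)) * μ)) = ψ μ + (-(Lψ μ)) * μ := by
        rw [hψeq, hLψeq, Finset.sum_add_distrib, ← Finset.sum_mul, Finset.sum_neg_distrib]
      rw [hexp, hedef] at hval
      have hKUB := KUB μ hμ (ε / 4) (by positivity)
      have hfact : t * (μ - lam0) = ε / 2 := by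
        rw [hμdef]
        field_simp
        ring
      have hprod : (t + Lψ μ) * (μ - lam0) ≤ t * (μ - lam0) := by
        apply mul_le_mul_of_nonneg_right _ (by rw [hμdef]; linarith)
        linarith
      have hring : (t + Lψ μ) * (μ - lam0)
          = t * μ - (ψ μ + (-(Lψ μ)) * μ + (t + Lψ μ) * lam0) + ψ μ := by ring
      linarith [hval, hKUB, hprod, hfact, hring, hε.le]
    · -- Case B : lam0 < c
      have hcle : ∀ μ ∈ R2, c ≤ μ := fun μ hμ => csInf_le R2bdd hμ
      have hβltc : ∀ i ∈ F, β i < c := fun i hi => hβlt i hi hcB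
      have hn : (0:ℝ) < (F.card : ℝ) := by exact_mod_cast Finset.card_pos.mpr hF
      -- multiplicative slope sum identity
      have hslsum : ∀ ρ : ℝ, ρ ≠ c → (∑ i ∈ F, sl j₀ j₁ c ρ (x i)) * (ρ - c) = ψ ρ - ψ c := by
        intro ρ hρ
        rw [Finset.sum_mul]
        have heach : ∀ i ∈ F, sl j₀ j₁ c ρ (x i) * (ρ - c) = E i ρ - E i c := by
          intro i hi
          unfold KThmAux.sl
          rw [div_mul_cancel₀ _ (sub_ne_zero.mpr hρ)]
        rw [Finset.sum_congr rfl heach, Finset.sum_sub_distrib]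
      -- slopes from the left at c are at most -t
      have hslope_le : ∀ ρ, lam0 < ρ → ρ < c → (∑ i ∈ F, sl j₀ j₁ c ρ (x i)) ≤ -t := by
        intro ρ hρ hρc
        have hcρ : (0:ℝ) < c - ρ := by linarith
        refine le_of_forall_pos_le_add ?_
        intro ε hε
        set θ : ℝ := min (1/2) (ε / t) with hθdef
        have hθpos : 0 < θ := lt_min (by norm_num) (by positivity)
        have hθhalf : θ ≤ 1/2 := min_le_left _ _
        have htθ : t * θ ≤ ε := by
          have h1 : θ ≤ ε / t := min_le_right _ _
          calc t * θ ≤ t * (ε / t) := mul_le_mul_of_nonneg_left h1 ht.le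
            _ = ε := by field_simp
        set μ : ℝ := c - θ * (c - ρ) with hμdef
        have hρμ : ρ < μ := by rw [hμdef]; nlinarith
        have hμc : μ < c := by rw [hμdef]; nlinarith
        have hμlam : lam0 < μ := hρ.trans hρμ
        have hμnotR2 : Lψ μ ≤ -t := by
          by_contra h
          push_neg at h
          have : c ≤ μ := hcle μ ((hR2mem μ).mpr ⟨hμlam, h⟩)
          linarith
        have hstep : ∀ i ∈ F, E i μ - E i ρ ≤ L i μ * (μ - ρ) := by
          intro i hi
          have h1 : sl j₀ j₁ μ ρ (x i) ≤ L i μ :=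
            sl_le_Ld (hxdec i) (hβlt i hi hρ) hρμ
          have h2 : sl j₀ j₁ μ ρ (x i) = (E i ρ - E i μ) / (ρ - μ) := rfl
          rw [h2, div_le_iff_of_neg (by linarith : ρ - μ < 0)] at h1
          nlinarith [h1]
        have hA : ψ μ - ψ ρ ≤ Lψ μ * (μ - ρ) := by
          have := Finset.sum_le_sum hstep
          rw [Finset.sum_sub_distrib, ← Finset.sum_mul] at this
          exact this
        have hA' : ψ μ - ψ ρ ≤ -t * (μ - ρ) :=
          hA.trans (mul_le_mul_of_nonneg_right hμnotR2 (by linarith))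
        have hB : ψ c ≤ ψ μ := hψ_anti hμlam hμc.le
        have hC : -t * (μ - ρ) = (-t + t * θ) * (c - ρ) := by rw [hμdef]; ring
        have hD : (-t + t * θ) * (c - ρ) ≤ (-t + ε) * (c - ρ) :=
          mul_le_mul_of_nonneg_right (by linarith) hcρ.le
        have hgoal2 : ψ c - ψ ρ ≤ (-t + ε) * (c - ρ) := by linarith
        have hX := hslsum ρ hρc.ne
        have hX' : (∑ i ∈ F, sl j₀ j₁ c ρ (x i)) * (c - ρ) = ψ c - ψ ρ := by
          have : (∑ i ∈ F, sl j₀ j₁ c ρ (x i)) * (c - ρ)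
              = -((∑ i ∈ F, sl j₀ j₁ c ρ (x i)) * (ρ - c)) := by ring
          rw [this, hX]; ring
        refine le_of_mul_le_mul_right ?_ hcρ
        rw [hX']
        exact hgoal2
      -- the sum of left derivatives at c is at most -t
      have hLc : Lψ c ≤ -t := by
        refine le_of_forall_pos_le_add ?_
        intro ε hε
        have hεn : (0:ℝ) < ε / F.card := by positivity
        have hch : ∀ i, ∃ ρ, i ∈ F →
            ((β i < ρ ∧ ρ < c) ∧ L i c - ε / F.card < sl j₀ j₁ c ρ (x i)) := by
          intro i
          by_cases hi : i ∈ F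
          · have h1 : L i c - ε / F.card < L i c := by linarith
            obtain ⟨r, ⟨ρ, hρmem, rfl⟩, hlt⟩ :=
              exists_lt_of_lt_csSup (Lset_nonempty (hβltc i hi)) h1
            exact ⟨ρ, fun _ => ⟨⟨hρmem.1, hρmem.2⟩, hlt⟩⟩
          · exact ⟨0, fun h => absurd h hi⟩
        choose ρf hρf using hch
        set ρ : ℝ := max (F.sup' hF ρf) ((lam0 + c)/2) with hρdef
        have hρc : ρ < c := by
          rw [hρdef]
          apply max_lt _ (by linarith)
          rw [Finset.sup'_lt_iff]
          intro i hi
          exact (hρf i hi).1.2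
        have hρlam : lam0 < ρ := by
          rw [hρdef]
          exact lt_of_lt_of_le (by linarith : lam0 < (lam0 + c)/2) (le_max_right _ _)
        have hkey : ∀ i ∈ F, L i c - ε / F.card ≤ sl j₀ j₁ c ρ (x i) := by
          intro i hi
          refine ((hρf i hi).2.le).trans
            (sl_mono (hxdec i) (hβltc i hi) (hρf i hi).1.1 (hβlt i hi hρlam)
              (hρf i hi).1.2.ne hρc.ne ?_)
          calc ρf i ≤ F.sup' hF ρf := Finset.le_sup' ρf hi
            _ ≤ ρ := by rw [hρdef]; exact le_max_left _ _
        have hsum := Finset.sum_le_sum hkey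
        rw [Finset.sum_sub_distrib, Finset.sum_const, nsmul_eq_mul] at hsum
        have hcard : (F.card : ℝ) * (ε / F.card) = ε := by field_simp
        have := hslope_le ρ hρlam hρc
        have hLψc : Lψ c = ∑ i ∈ F, L i c := rfl
        rw [hLψc]
        linarith
      -- the sum of right derivatives at c is at least -t
      have hslope_ge : ∀ σ, c < σ → -t ≤ (∑ i ∈ F, sl j₀ j₁ c σ (x i)) := by
        intro σ hcσ
        have hσc : (0:ℝ) < σ - c := by linarith
        refine le_of_forall_pos_le_add ?_
        intro ε hε
        set ρ₀ : ℝ := (lam0 + c)/2 with hρ₀def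
        have hρ₀lam : lam0 < ρ₀ := by rw [hρ₀def]; linarith
        have hρ₀c : ρ₀ < c := by rw [hρ₀def]; linarith
        set m : ℝ := ∑ i ∈ F, sl j₀ j₁ c ρ₀ (x i) with hmdef
        have hMpos : (0:ℝ) < |m| + t + 1 := by positivity
        have hδpos : (0:ℝ) < ε * (σ - c) / (|m| + t + 1) := by positivity
        obtain ⟨μ, hμR2, hμlt⟩ := exists_lt_of_csInf_lt R2ne
          (show sInf R2 < min σ (c + ε * (σ - c) / (|m| + t + 1)) by
            rw [← hcdef]
            exact lt_min hcσ (by linarith))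
        have hcμ : c ≤ μ := hcle μ hμR2
        have hμσ : μ < σ := hμlt.trans_le (min_le_left _ _)
        have hμsmall : μ - c ≤ ε * (σ - c) / (|m| + t + 1) := by
          have := hμlt.trans_le (min_le_right _ _)
          linarith
        obtain ⟨hμlam, hμLψ⟩ := (hR2mem μ).mp hμR2
        have hi1 : ∀ i ∈ F, L i μ * (σ - μ) ≤ E i σ - E i μ := by
          intro i hi
          have h1 : L i μ ≤ sl j₀ j₁ μ σ (x i) := Ld_le_sl (hxdec i) (hβlt i hi hμlam) hμσ
          have h2 : sl j₀ j₁ μ σ (x i) = (E i σ - E i μ) / (σ - μ) := rfl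
          rw [h2, le_div_iff₀ (by linarith : (0:ℝ) < σ - μ)] at h1
          exact h1
        have hψ1 : Lψ μ * (σ - μ) ≤ ψ σ - ψ μ := by
          have := Finset.sum_le_sum hi1
          rw [Finset.sum_sub_distrib, ← Finset.sum_mul] at this
          exact this
        have hψ1' : -t * (σ - μ) ≤ ψ σ - ψ μ :=
          (mul_le_mul_of_nonneg_right hμLψ.le (by linarith)).trans hψ1
        have hψ2 : m * (μ - c) ≤ ψ μ - ψ c := by
          rcases eq_or_lt_of_le hcμ with hceq | hclt
          · rw [← hceq]; simp
          · have hi2 : ∀ i ∈ F, sl j₀ j₁ c ρ₀ (x i) * (μ - c) ≤ E i μ - E i c := by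
              intro i hi
              have h1 : sl j₀ j₁ c ρ₀ (x i) ≤ sl j₀ j₁ c μ (x i) :=
                sl_mono (hxdec i) (hβltc i hi) (hβlt i hi hρ₀lam) (hβlt i hi (hcB.trans hclt))
                  hρ₀c.ne hclt.ne' (by linarith)
              have h2 : sl j₀ j₁ c μ (x i) = (E i μ - E i c) / (μ - c) := rfl
              rw [h2, le_div_iff₀ (by linarith : (0:ℝ) < μ - c)] at h1
              exact h1
            have := Finset.sum_le_sum hi2
            rw [Finset.sum_sub_distrib, ← Finset.sum_mul] at this
            exact this
        have h6 : -(|m| + t + 1) * (μ - c) ≤ m * (μ - c) :=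
          mul_le_mul_of_nonneg_right (by nlinarith [neg_abs_le m, abs_nonneg m]) (by linarith)
        have h7 : (|m| + t + 1) * (μ - c) ≤ ε * (σ - c) := by
          have h71 := mul_le_mul_of_nonneg_left hμsmall hMpos.le
          have h72 : (|m| + t + 1) * (ε * (σ - c) / (|m| + t + 1)) = ε * (σ - c) := by
            field_simp
          linarith
        have htμc : 0 ≤ t * (μ - c) := mul_nonneg ht.le (by linarith)
        have hfin : (-t - ε) * (σ - c) ≤ ψ σ - ψ c := by nlinarith [hψ1', hψ2, h6, h7, htμc]
        have hX := hslsum σ hcσ.ne'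
        have hge : (-t - ε) ≤ ∑ i ∈ F, sl j₀ j₁ c σ (x i) := by
          refine le_of_mul_le_mul_right ?_ hσc
          rw [hX]
          exact hfin
        linarith
      have hRc : -t ≤ ∑ i ∈ F, R i c := by
        refine le_of_forall_pos_le_add ?_
        intro ε hε
        have hεn : (0:ℝ) < ε / F.card := by positivity
        have hch : ∀ i, ∃ σ, i ∈ F →
            (c < σ ∧ sl j₀ j₁ c σ (x i) < R i c + ε / F.card) := by
          intro i
          by_cases hi : i ∈ F
          · have h1 : R i c < R i c + ε / F.card := by linarith
            obtain ⟨r, ⟨σ, hσmem, rfl⟩, hlt⟩ :=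
              exists_lt_of_csInf_lt (Rset_nonempty (v := x i) (μ := c)) h1
            exact ⟨σ, fun _ => ⟨hσmem, hlt⟩⟩
          · exact ⟨c + 1, fun h => absurd h hi⟩
        choose σf hσf using hch
        set σ : ℝ := min (F.inf' hF σf) (c + 1) with hσdef
        have hcσ : c < σ := by
          rw [hσdef]
          refine lt_min ?_ (by linarith)
          rw [Finset.lt_inf'_iff]
          intro i hi
          exact (hσf i hi).1
        have hkey : ∀ i ∈ F, sl j₀ j₁ c σ (x i) ≤ R i c + ε / F.card := by
          intro i hi
          refine (sl_mono (hxdec i) (hβltc i hi) ((hβltc i hi).trans hcσ)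
            ((hβltc i hi).trans (hσf i hi).1) hcσ.ne' (hσf i hi).1.ne' ?_).trans
            (hσf i hi).2.le
          calc σ ≤ F.inf' hF σf := by rw [hσdef]; exact min_le_left _ _
            _ ≤ σf i := Finset.inf'_le σf hi
        have hsum := Finset.sum_le_sum hkey
        rw [Finset.sum_add_distrib, Finset.sum_const, nsmul_eq_mul] at hsum
        have hcard : (F.card : ℝ) * (ε / F.card) = ε := by field_simp
        have := hslope_ge σ hcσ
        linarith
      -- choose the mixing subgradients
      have hLR : ∀ i ∈ F, L i c ≤ R i c := fun i hi => Ld_le_Rd (hxdec i) (hβltc i hi)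
      have hLψc : Lψ c = ∑ i ∈ F, L i c := rfl
      have hmix : ∃ sfun : ℕ → ℝ, (∀ i ∈ F, L i c ≤ sfun i ∧ sfun i ≤ R i c) ∧
          (∑ i ∈ F, sfun i) = -t := by
        by_cases hLD : (∑ i ∈ F, R i c) - (∑ i ∈ F, L i c) = 0
        · refine ⟨fun i => L i c, fun i hi => ⟨le_refl _, hLR i hi⟩, ?_⟩
          rw [← hLψc]
          rw [hLψc] at hLc ⊢
          linarith [hRc]
        · have hLDpos : 0 < (∑ i ∈ F, R i c) - (∑ i ∈ F, L i c) := by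
            rcases lt_or_gt_of_ne hLD with h | h
            · exfalso
              rw [hLψc] at hLc
              linarith [hRc]
            · exact h
          set θ : ℝ := (-t - (∑ i ∈ F, L i c))/((∑ i ∈ F, R i c) - (∑ i ∈ F, L i c)) with hθdef
          have hθ0 : 0 ≤ θ := by
            apply div_nonneg _ hLDpos.le
            rw [hLψc] at hLc
            linarith
          have hθ1 : θ ≤ 1 := by
            rw [hθdef, div_le_one hLDpos]
            linarith [hRc]
          refine ⟨fun i => L i c + θ * (R i c - L i c), fun i hi => ⟨?_, ?_⟩, ?_⟩
          · show L i c ≤ L i c + θ * (R i c - L i c)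
            nlinarith [mul_nonneg hθ0 (sub_nonneg.mpr (hLR i hi))]
          · show L i c + θ * (R i c - L i c) ≤ R i c
            nlinarith [mul_nonneg (by linarith : (0:ℝ) ≤ 1 - θ) (sub_nonneg.mpr (hLR i hi))]
          · rw [Finset.sum_add_distrib, ← Finset.mul_sum, Finset.sum_sub_distrib]
            have hθmul : θ * ((∑ i ∈ F, R i c) - (∑ i ∈ F, L i c)) = -t - (∑ i ∈ F, L i c) := by
              rw [hθdef, div_mul_cancel₀ _ hLD]
            rw [hθmul]
            ring
      obtain ⟨sfun, hsfun, hssum⟩ := hmix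
      have hsneg : (∑ i ∈ F, (-(sfun i))) = t := by
        rw [Finset.sum_neg_distrib, hssum]
        ring
      have hval : (∑ i ∈ F, (E i c + (-(sfun i)) * c)) + 0 * lam0 ≤ sSup SS :=
        SLB c hcB sfun 0 (le_refl 0) hsfun (by rw [hsneg]; linarith)
      have hexp : (∑ i ∈ F, (E i c + (-(sfun i)) * c)) = ψ c + t * c := by
        rw [Finset.sum_add_distrib, ← Finset.sum_mul, hsneg,
          show ψ c = ∑ i ∈ F, E i c from rfl]
      refine le_of_forall_pos_le_add ?_
      intro ε hε
      have hKUB := KUB c hcB ε hε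
      rw [hexp] at hval
      linarith
end

section
/- Let (A₀, A₁) be a compatible couple of Banach spaces. For n ∈ ℕ, let P_n denote the projection on (A₀+A₁)-valued sequences that preserves the first n coordinates and sets the rest to zero. Then for every x ∈ ℓ₁(A₀) + ℓ_∞(A₁) and every t > 0, K_t(x; ℓ₁(A₀), ℓ_∞(A₁)) = sup_n K_t(P_n x; ℓ₁(A₀), ℓ_∞(A₁)). -/
open MeasureTheory ENNReal Set Filter Topology

namespace KProofAux

variable {V A₀ A₁ : Type*} [AddCommGroup V] [Module ℝ V]
    [NormedAddCommGroup A₀] [NormedSpace ℝ A₀] [NormedAddCommGroup A₁] [NormedSpace ℝ A₁]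

def KSet (j₀ : A₀ →ₗ[ℝ] V) (j₁ : A₁ →ₗ[ℝ] V) (t : ℝ) (x : ℕ → V) : Set ℝ :=
  {r | ∃ (a : ℕ → A₀) (b : ℕ → A₁), Summable (fun i => ‖a i‖) ∧
      BddAbove (Set.range fun i => ‖b i‖) ∧ (∀ i, x i = j₀ (a i) + j₁ (b i)) ∧
      r = (∑' i, ‖a i‖) + t * (⨆ i, ‖b i‖)}

theorem Kl1linf_eq_sInf (j₀ : A₀ →ₗ[ℝ] V) (j₁ : A₁ →ₗ[ℝ] V) (t : ℝ) (x : ℕ → V) :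
    Kl1linf j₀ j₁ t x = sInf (KSet j₀ j₁ t x) := rfl

variable {j₀ : A₀ →ₗ[ℝ] V} {j₁ : A₁ →ₗ[ℝ] V} {t : ℝ}

lemma sup_nonneg' {b : ℕ → A₁} (hb : BddAbove (Set.range fun i => ‖b i‖)) :
    0 ≤ ⨆ i, ‖b i‖ :=
  le_trans (norm_nonneg (b 0)) (le_ciSup hb 0)

lemma mem_nonneg (ht : 0 ≤ t) {x : ℕ → V} {r : ℝ} (hr : r ∈ KSet j₀ j₁ t x) : 0 ≤ r := by
  obtain ⟨a, b, ha, hb, -, rfl⟩ := hr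
  have h1 : 0 ≤ ∑' i, ‖a i‖ := tsum_nonneg fun i => norm_nonneg _
  have h2 : 0 ≤ ⨆ i, ‖b i‖ := sup_nonneg' hb
  have := mul_nonneg ht h2
  linarith

lemma bddBelow_KSet (ht : 0 ≤ t) (x : ℕ → V) : BddBelow (KSet j₀ j₁ t x) :=
  ⟨0, fun _ hr => mem_nonneg ht hr⟩

/-- truncating a decomposition gives a decomposition of the truncation, with smaller cost. -/
lemma trunc_le (ht : 0 ≤ t) (n : ℕ) {x : ℕ → V} {r : ℝ} (hr : r ∈ KSet j₀ j₁ t x) :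
    ∃ r' ∈ KSet j₀ j₁ t (fun k => if k < n then x k else 0), r' ≤ r := by
  obtain ⟨a, b, ha, hb, hdec, rfl⟩ := hr
  set a' : ℕ → A₀ := fun i => if i < n then a i else 0 with ha'
  set b' : ℕ → A₁ := fun i => if i < n then b i else 0 with hb'
  have hale : ∀ i, ‖a' i‖ ≤ ‖a i‖ := by
    intro i; simp only [ha']; split <;> simp [norm_nonneg]
  have hble : ∀ i, ‖b' i‖ ≤ ‖b i‖ := by
    intro i; simp only [hb']; split <;> simp [norm_nonneg]
  have ha'sum : Summable fun i => ‖a' i‖ :=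
    Summable.of_nonneg_of_le (fun i => norm_nonneg _) hale ha
  have hb'bdd : BddAbove (Set.range fun i => ‖b' i‖) := by
    obtain ⟨c, hc⟩ := hb
    exact ⟨c, by rintro r ⟨i, rfl⟩; exact le_trans (hble i) (hc ⟨i, rfl⟩)⟩
  refine ⟨(∑' i, ‖a' i‖) + t * (⨆ i, ‖b' i‖), ⟨a', b', ha'sum, hb'bdd, ?_, rfl⟩, ?_⟩
  · intro i
    by_cases h : i < n
    · simp only [ha', hb', if_pos h]; exact hdec i
    · simp [ha', hb', if_neg h]
  · have h1 : (∑' i, ‖a' i‖) ≤ ∑' i, ‖a i‖ := Summable.tsum_le_tsum hale ha'sum ha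
    have h2 : (⨆ i, ‖b' i‖) ≤ ⨆ i, ‖b i‖ :=
      ciSup_le fun i => le_trans (hble i) (le_ciSup hb i)
    have := mul_le_mul_of_nonneg_left h2 ht
    linarith

end KProofAux

open KProofAux in
/-- Theorem 2: the `K_t`-functional of `x ∈ ℓ₁(A₀) + ℓ_∞(A₁)` is the supremum of the
`K_t`-functionals of its truncations `Pₙ x`. -/
theorem Kl1linf_eq_iSup_truncations
    {V A₀ A₁ : Type*} [AddCommGroup V] [Module ℝ V] [TopologicalSpace V]
    [IsTopologicalAddGroup V] [ContinuousSMul ℝ V] [T2Space V]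
    [NormedAddCommGroup A₀] [NormedSpace ℝ A₀] [CompleteSpace A₀]
    [NormedAddCommGroup A₁] [NormedSpace ℝ A₁] [CompleteSpace A₁]
    (j₀ : A₀ →ₗ[ℝ] V) (j₁ : A₁ →ₗ[ℝ] V)
    (hc₀ : Continuous j₀) (hc₁ : Continuous j₁)
    (hi₀ : Function.Injective j₀) (hi₁ : Function.Injective j₁)
    (x : ℕ → V) (hx : MemSumSeq j₀ j₁ x) (t : ℝ) (ht : 0 < t) :
    Kl1linf j₀ j₁ t x =
      ⨆ n : ℕ, Kl1linf j₀ j₁ t (fun k => if k < n then x k else 0) := by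
  have ht' : (0:ℝ) ≤ t := ht.le
  -- the set for `x` is nonempty
  obtain ⟨a₀, b₀, ha₀, hb₀, hdec₀⟩ := hx
  have hxne : (KSet j₀ j₁ t x).Nonempty :=
    ⟨(∑' i, ‖a₀ i‖) + t * (⨆ i, ‖b₀ i‖), a₀, b₀, ha₀, hb₀, hdec₀, rfl⟩
  -- each truncation set is nonempty
  have htne : ∀ n : ℕ, (KSet j₀ j₁ t (fun k => if k < n then x k else 0)).Nonempty := by
    intro n
    obtain ⟨r', hr', -⟩ := trunc_le ht' n hxne.choose_spec
    exact ⟨r', hr'⟩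
  -- easy direction: each truncation has smaller K
  have heasy : ∀ n : ℕ, Kl1linf j₀ j₁ t (fun k => if k < n then x k else 0) ≤
      Kl1linf j₀ j₁ t x := by
    intro n
    rw [Kl1linf_eq_sInf, Kl1linf_eq_sInf]
    refine le_csInf hxne fun r hr => ?_
    obtain ⟨r', hr', hle⟩ := trunc_le ht' n hr
    exact le_trans (csInf_le (bddBelow_KSet ht' _) hr') hle
  have hbddfam : BddAbove (Set.range fun n =>
      Kl1linf j₀ j₁ t (fun k => if k < n then x k else 0)) :=
    ⟨Kl1linf j₀ j₁ t x, by rintro r ⟨n, rfl⟩; exact heasy n⟩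
  set S := ⨆ n : ℕ, Kl1linf j₀ j₁ t (fun k => if k < n then x k else 0) with hS
  refine le_antisymm ?_ (ciSup_le heasy)
  -- hard direction: K(x) ≤ S
  refine le_of_forall_pos_le_add fun ε hε => ?_
  set M : ℝ := S + ε / 2 with hM
  -- near-optimal decompositions of the truncations
  have hdecn : ∀ n : ℕ, ∃ (a : ℕ → A₀) (b : ℕ → A₁), (Summable fun i => ‖a i‖) ∧
      BddAbove (Set.range fun i => ‖b i‖) ∧
      (∀ i, (if i < n then x i else 0) = j₀ (a i) + j₁ (b i)) ∧
      (∑' i, ‖a i‖) + t * (⨆ i, ‖b i‖) < M := by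
    intro n
    obtain ⟨r, hr, hrlt⟩ := Real.lt_sInf_add_pos (htne n) (half_pos hε)
    obtain ⟨a, b, ha, hb, hd, rfl⟩ := hr
    refine ⟨a, b, ha, hb, hd, ?_⟩
    have h1 : sInf (KSet j₀ j₁ t (fun k => if k < n then x k else 0)) ≤ S :=
      le_ciSup hbddfam n
    calc (∑' i, ‖a i‖) + t * (⨆ i, ‖b i‖)
        < sInf (KSet j₀ j₁ t (fun k => if k < n then x k else 0)) + ε / 2 := hrlt
      _ ≤ M := by rw [hM]; linarith
  choose A B hAsum hBbdd hABx hcost using hdecn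
  have hsupBnn : ∀ n, (0:ℝ) ≤ ⨆ i, ‖B n i‖ := fun n => sup_nonneg' (hBbdd n)
  have htsumAnn : ∀ n, (0:ℝ) ≤ ∑' i, ‖A n i‖ := fun n => tsum_nonneg fun i => norm_nonneg _
  have hAbd : ∀ n i, ‖A n i‖ ≤ M := by
    intro n i
    have h1 : ‖A n i‖ ≤ ∑' j, ‖A n j‖ := Summable.le_tsum (hAsum n) i fun j _ => norm_nonneg _
    nlinarith [hcost n, hsupBnn n]
  have hBbd : ∀ n i, ‖B n i‖ ≤ M / t := by
    intro n i
    have h1 : ‖B n i‖ ≤ ⨆ j, ‖B n j‖ := le_ciSup (hBbdd n) i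
    rw [le_div_iff₀ ht]
    nlinarith [hcost n, htsumAnn n]
  -- ultrafilter limits of the norms
  set U : Ultrafilter ℕ := hyperfilter ℕ with hU
  have hlimA : ∀ i : ℕ, ∃ α ∈ Icc (0:ℝ) M,
      Tendsto (fun n => ‖A n i‖) (U : Filter ℕ) (𝓝 α) := by
    intro i
    obtain ⟨α, hα, hle⟩ := (isCompact_Icc (a := (0:ℝ)) (b := M)).ultrafilter_le_nhds
      (U.map fun n => ‖A n i‖) (by
        rw [le_principal_iff, Ultrafilter.mem_coe, Ultrafilter.mem_map]
        exact univ_mem' fun n => ⟨norm_nonneg _, hAbd n i⟩)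
    exact ⟨α, hα, hle⟩
  have hlimB : ∀ i : ℕ, ∃ β ∈ Icc (0:ℝ) (M / t),
      Tendsto (fun n => ‖B n i‖) (U : Filter ℕ) (𝓝 β) := by
    intro i
    obtain ⟨β, hβ, hle⟩ := (isCompact_Icc (a := (0:ℝ)) (b := M / t)).ultrafilter_le_nhds
      (U.map fun n => ‖B n i‖) (by
        rw [le_principal_iff, Ultrafilter.mem_coe, Ultrafilter.mem_map]
        exact univ_mem' fun n => ⟨norm_nonneg _, hBbd n i⟩)
    exact ⟨β, hβ, hle⟩
  choose α hαmem hαtend using hlimA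
  choose β hβmem hβtend using hlimB
  -- key inequality
  have hkey : ∀ (F : Finset ℕ) (j : ℕ), (∑ i ∈ F, α i) + t * β j ≤ M := by
    intro F j
    refine le_of_tendsto ((tendsto_finset_sum F fun i _ => hαtend i).add
      ((hβtend j).const_mul t)) (Eventually.of_forall fun n => ?_)
    have h1 : (∑ i ∈ F, ‖A n i‖) ≤ ∑' i, ‖A n i‖ :=
      Summable.sum_le_tsum F (fun i _ => norm_nonneg _) (hAsum n)
    have h2 : ‖B n j‖ ≤ ⨆ i, ‖B n i‖ := le_ciSup (hBbdd n) j
    have h3 := hcost n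
    nlinarith
  have hαsum : Summable α := by
    refine summable_of_sum_range_le (c := M) (fun i => (hαmem i).1) fun n => ?_
    have := hkey (Finset.range n) 0
    nlinarith [(hβmem 0).1]
  have htsumβ : ∀ j, (∑' i, α i) + t * β j ≤ M := by
    intro j
    have h1 : (∑' i, α i) ≤ M - t * β j :=
      Summable.tsum_le_of_sum_le hαsum fun F => by linarith [hkey F j]
    linarith
  have hβbdd : BddAbove (Set.range β) := ⟨M / t, by rintro r ⟨j, rfl⟩; exact (hβmem j).2⟩
  have hmain : (∑' i, α i) + t * (⨆ j, β j) ≤ M := by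
    have h1 : (⨆ j, β j) ≤ (M - ∑' i, α i) / t :=
      ciSup_le fun j => (le_div_iff₀ ht).mpr (by nlinarith [htsumβ j])
    have h2 : t * (⨆ j, β j) ≤ t * ((M - ∑' i, α i) / t) :=
      mul_le_mul_of_nonneg_left h1 ht'
    have h3 : t * ((M - ∑' i, α i) / t) = M - ∑' i, α i := by
      rw [mul_comm, div_mul_cancel₀ _ (ne_of_gt ht)]
    have h4 : t * (⨆ j, β j) ≤ M - ∑' i, α i := h2.trans h3.le
    linarith [h4]
  -- error budget
  set ε' : ℝ := ε / (2 * (2 + t)) with hε'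
  have hε'pos : 0 < ε' := by positivity
  set δ : ℕ → ℝ := fun i => ε' * (1/2 : ℝ) ^ i with hδ
  have hδpos : ∀ i, 0 < δ i := fun i => by positivity
  have hδle : ∀ i, δ i ≤ ε' := by
    intro i
    have : ((1:ℝ)/2) ^ i ≤ 1 := pow_le_one₀ (by norm_num) (by norm_num)
    calc δ i = ε' * (1/2:ℝ)^i := rfl
      _ ≤ ε' * 1 := by nlinarith
      _ = ε' := mul_one _
  have hδsum : Summable δ :=
    (summable_geometric_of_lt_one (by norm_num) (by norm_num)).mul_left ε'
  have hδtsum : (∑' i, δ i) = 2 * ε' := by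
    rw [hδ, tsum_mul_left, tsum_geometric_of_lt_one (by norm_num) (by norm_num)]
    norm_num; ring
  -- choose a good index for each coordinate
  have hsel : ∀ i : ℕ, ∃ n : ℕ, i < n ∧ ‖A n i‖ ≤ α i + δ i ∧ ‖B n i‖ ≤ β i + δ i := by
    intro i
    have h1 : ∀ᶠ n in (U : Filter ℕ), ‖A n i‖ < α i + δ i :=
      (hαtend i).eventually_lt_const (lt_add_of_pos_right _ (hδpos i))
    have h2 : ∀ᶠ n in (U : Filter ℕ), ‖B n i‖ < β i + δ i :=
      (hβtend i).eventually_lt_const (lt_add_of_pos_right _ (hδpos i))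
    have h3 : ∀ᶠ n in (U : Filter ℕ), i < n := by
      refine Eventually.filter_mono (hyperfilter_le_cofinite) ?_
      rw [Nat.cofinite_eq_atTop]
      exact eventually_gt_atTop i
    obtain ⟨n, hn3, hn1, hn2⟩ := (h3.and (h1.and h2)).exists
    exact ⟨n, hn3, hn1.le, hn2.le⟩
  choose N hNi hNa hNb using hsel
  set a : ℕ → A₀ := fun i => A (N i) i with haa
  set b : ℕ → A₁ := fun i => B (N i) i with hbb
  have hdeca : ∀ i, x i = j₀ (a i) + j₁ (b i) := by
    intro i
    have := hABx (N i) i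
    rwa [if_pos (hNi i)] at this
  have hasum : Summable fun i => ‖a i‖ :=
    Summable.of_nonneg_of_le (fun i => norm_nonneg _) (fun i => hNa i) (hαsum.add hδsum)
  have hatsum : (∑' i, ‖a i‖) ≤ (∑' i, α i) + 2 * ε' := by
    have h1 : (∑' i, ‖a i‖) ≤ ∑' i, (α i + δ i) :=
      Summable.tsum_le_tsum (fun i => hNa i) hasum (hαsum.add hδsum)
    rwa [Summable.tsum_add hαsum hδsum, hδtsum] at h1
  have hbbd : ∀ i, ‖b i‖ ≤ (⨆ j, β j) + ε' := by
    intro i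
    calc ‖b i‖ ≤ β i + δ i := hNb i
      _ ≤ (⨆ j, β j) + ε' := add_le_add (le_ciSup hβbdd i) (hδle i)
  have hbBdd : BddAbove (Set.range fun i => ‖b i‖) :=
    ⟨(⨆ j, β j) + ε', by rintro r ⟨i, rfl⟩; exact hbbd i⟩
  have hbsup : (⨆ i, ‖b i‖) ≤ (⨆ j, β j) + ε' := ciSup_le hbbd
  -- conclude
  rw [Kl1linf_eq_sInf]
  have hmem : (∑' i, ‖a i‖) + t * (⨆ i, ‖b i‖) ∈ KSet j₀ j₁ t x :=
    ⟨a, b, hasum, hbBdd, hdeca, rfl⟩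
  refine le_trans (csInf_le (bddBelow_KSet ht' x) hmem) ?_
  have h4 : t * (⨆ i, ‖b i‖) ≤ t * ((⨆ j, β j) + ε') :=
    mul_le_mul_of_nonneg_left hbsup ht'
  have h5 : (2 + t) * ε' = ε / 2 := by
    rw [hε']; field_simp
  have h6 : t * ((⨆ j, β j) + ε') = t * (⨆ j, β j) + t * ε' := mul_add t _ _
  have h7 : t * (⨆ i, ‖b i‖) ≤ t * (⨆ j, β j) + t * ε' := h4.trans h6.le
  have h8 : (2 + t) * ε' = 2 * ε' + t * ε' := by ring
  calc (∑' i, ‖a i‖) + t * (⨆ i, ‖b i‖)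
      ≤ ((∑' i, α i) + 2 * ε') + ((t * (⨆ j, β j)) + t * ε') := add_le_add hatsum h7
    _ = ((∑' i, α i) + t * (⨆ j, β j)) + (2 * ε' + t * ε') := by ring
    _ ≤ M + (2 * ε' + t * ε') := add_le_add_left hmain _
    _ = M + ε / 2 := by rw [← h8, h5]
    _ = S + ε := by rw [hM]; ring
end

section
/- Let (A₀, A₁) be a compatible couple of Banach spaces. Then for every x = (x_i) ∈ ℓ₁(A₀) + ℓ_∞(A₁) (no finite support assumption) and every t > 0, K_t(x; ℓ₁(A₀), ℓ_∞(A₁)) = sup { Σ_i K_{t_i}(x_i; A₀, A₁) : t_i ≥ 0, Σ_i t_i ≤ t }. -/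
open MeasureTheory ENNReal Set Filter

section Aux
variable {V A₀ A₁ : Type*} [AddCommGroup V] [Module ℝ V]
    [NormedAddCommGroup A₀] [NormedSpace ℝ A₀] [NormedAddCommGroup A₁] [NormedSpace ℝ A₁]
    (j₀ : A₀ →ₗ[ℝ] V) (j₁ : A₁ →ₗ[ℝ] V) (x : ℕ → V)

/-- Set of `‖a‖` over decompositions of `x i` with `‖b‖ ≤ μ`. -/
def SetE (i : ℕ) (μ : ℝ) : Set ℝ :=
  {r | ∃ a b, x i = j₀ a + j₁ b ∧ ‖b‖ ≤ μ ∧ r = ‖a‖}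

noncomputable def Ee (i : ℕ) (μ : ℝ) : ℝ := sInf (SetE j₀ j₁ x i μ)

variable {j₀ j₁ x}

lemma SetE_nonneg {i : ℕ} {μ : ℝ} {r : ℝ} (hr : r ∈ SetE j₀ j₁ x i μ) : 0 ≤ r := by
  obtain ⟨a, b, -, -, rfl⟩ := hr; exact norm_nonneg a

lemma bddBelow_SetE (i : ℕ) (μ : ℝ) : BddBelow (SetE j₀ j₁ x i μ) :=
  ⟨0, fun r hr => SetE_nonneg hr⟩

lemma Ee_nonneg (i : ℕ) (μ : ℝ) : 0 ≤ Ee j₀ j₁ x i μ :=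
  Real.sInf_nonneg fun _ hr => SetE_nonneg hr

lemma Ee_le {i : ℕ} {μ : ℝ} {a : A₀} {b : A₁} (hab : x i = j₀ a + j₁ b) (hb : ‖b‖ ≤ μ) :
    Ee j₀ j₁ x i μ ≤ ‖a‖ :=
  csInf_le (bddBelow_SetE i μ) ⟨a, b, hab, hb, rfl⟩

lemma SetE_subset {i : ℕ} {μ μ' : ℝ} (h : μ ≤ μ') : SetE j₀ j₁ x i μ ⊆ SetE j₀ j₁ x i μ' := by
  rintro r ⟨a, b, hab, hb, rfl⟩; exact ⟨a, b, hab, hb.trans h, rfl⟩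

lemma Ee_anti {i : ℕ} {μ μ' : ℝ} (hne : (SetE j₀ j₁ x i μ).Nonempty) (h : μ ≤ μ') :
    Ee j₀ j₁ x i μ' ≤ Ee j₀ j₁ x i μ :=
  csInf_le_csInf (bddBelow_SetE i μ') hne (SetE_subset h)

lemma exists_SetE_lt {i : ℕ} {μ : ℝ} (hne : (SetE j₀ j₁ x i μ).Nonempty) {ε : ℝ} (hε : 0 < ε) :
    ∃ a b, x i = j₀ a + j₁ b ∧ ‖b‖ ≤ μ ∧ ‖a‖ < Ee j₀ j₁ x i μ + ε := by
  obtain ⟨r, hr, hlt⟩ := exists_lt_of_csInf_lt hne (lt_add_of_pos_right _ hε)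
  obtain ⟨a, b, hab, hb, rfl⟩ := hr
  exact ⟨a, b, hab, hb, hlt⟩

/-- Convexity of `Ee` in `μ` (three-point inequality, multiplied through). -/
lemma Ee_combo {i : ℕ} {p q r : ℝ} (hp : (SetE j₀ j₁ x i p).Nonempty)
    (hr : (SetE j₀ j₁ x i r).Nonempty) (hpq : p < q) (hqr : q < r) :
    (r - p) * Ee j₀ j₁ x i q ≤ (r - q) * Ee j₀ j₁ x i p + (q - p) * Ee j₀ j₁ x i r := by
  have hrp : (0:ℝ) < r - p := by linarith
  refine le_of_forall_pos_le_add fun ε hε => ?_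
  have hε' : 0 < ε / (r - p) := by positivity
  obtain ⟨a₁, b₁, hx₁, hb₁, ha₁⟩ := exists_SetE_lt hp hε'
  obtain ⟨a₂, b₂, hx₂, hb₂, ha₂⟩ := exists_SetE_lt hr hε'
  set α : ℝ := (r - q) / (r - p) with hα
  set β : ℝ := (q - p) / (r - p) with hβ
  have hα0 : 0 ≤ α := div_nonneg (by linarith) (by linarith)
  have hβ0 : 0 ≤ β := div_nonneg (by linarith) (by linarith)
  have hαβ : α + β = 1 := by rw [hα, hβ, ← add_div]; field_simp; ring
  have hmix : x i = j₀ (α • a₁ + β • a₂) + j₁ (α • b₁ + β • b₂) := by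
    have : x i = α • (x i) + β • (x i) := by rw [← add_smul, hαβ, one_smul]
    rw [map_add, map_add, LinearMap.map_smul, LinearMap.map_smul, LinearMap.map_smul, LinearMap.map_smul]
    calc x i = α • (x i) + β • (x i) := this
    _ = α • (j₀ a₁ + j₁ b₁) + β • (j₀ a₂ + j₁ b₂) := by rw [← hx₁, ← hx₂]
    _ = _ := by rw [smul_add, smul_add]; abel
  have hbmix : ‖α • b₁ + β • b₂‖ ≤ q := by
    calc ‖α • b₁ + β • b₂‖ ≤ ‖α • b₁‖ + ‖β • b₂‖ := norm_add_le _ _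
    _ = α * ‖b₁‖ + β * ‖b₂‖ := by
        rw [norm_smul, norm_smul, Real.norm_eq_abs, Real.norm_eq_abs, abs_of_nonneg hα0,
          abs_of_nonneg hβ0]
    _ ≤ α * p + β * r := by
        gcongr
    _ = q := by rw [hα, hβ]; field_simp; try ring
  have hEq : Ee j₀ j₁ x i q ≤ α * ‖a₁‖ + β * ‖a₂‖ := by
    refine (Ee_le hmix hbmix).trans ?_
    calc ‖α • a₁ + β • a₂‖ ≤ ‖α • a₁‖ + ‖β • a₂‖ := norm_add_le _ _
    _ = α * ‖a₁‖ + β * ‖a₂‖ := by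
        rw [norm_smul, norm_smul, Real.norm_eq_abs, Real.norm_eq_abs, abs_of_nonneg hα0,
          abs_of_nonneg hβ0]
  have h1 : (r - p) * Ee j₀ j₁ x i q ≤ (r - q) * ‖a₁‖ + (q - p) * ‖a₂‖ := by
    have := mul_le_mul_of_nonneg_left hEq (le_of_lt hrp)
    calc (r - p) * Ee j₀ j₁ x i q ≤ (r - p) * (α * ‖a₁‖ + β * ‖a₂‖) := this
    _ = (r - q) * ‖a₁‖ + (q - p) * ‖a₂‖ := by rw [hα, hβ]; field_simp; try ring
  have h2 : (r - q) * ‖a₁‖ ≤ (r - q) * (Ee j₀ j₁ x i p + ε / (r - p)) := by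
    apply mul_le_mul_of_nonneg_left (le_of_lt ha₁); linarith
  have h3 : (q - p) * ‖a₂‖ ≤ (q - p) * (Ee j₀ j₁ x i r + ε / (r - p)) := by
    apply mul_le_mul_of_nonneg_left (le_of_lt ha₂); linarith
  have h4 : (r - q) * (ε / (r - p)) + (q - p) * (ε / (r - p)) = ε := by
    field_simp
    try ring
  nlinarith [h1, h2, h3]

/-- Left-chord global minorant with error. -/
lemma minorL {i : ℕ} {p q m : ℝ} (hp : (SetE j₀ j₁ x i p).Nonempty)
    (hq : (SetE j₀ j₁ x i q).Nonempty) (hm : (SetE j₀ j₁ x i m).Nonempty) (hpq : p < q) :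
    (Ee j₀ j₁ x i q - Ee j₀ j₁ x i p) * (m - q) - (Ee j₀ j₁ x i p - Ee j₀ j₁ x i q) * (q - p)
      ≤ (q - p) * (Ee j₀ j₁ x i m - Ee j₀ j₁ x i q) := by
  set Ep := Ee j₀ j₁ x i p
  set Eq := Ee j₀ j₁ x i q
  set Em := Ee j₀ j₁ x i m
  have hanti : Eq ≤ Ep := Ee_anti hp hpq.le
  rcases lt_trichotomy m p with hmp | hmp | hmp
  · have hc := Ee_combo hm hq hmp hpq
    nlinarith [mul_nonneg (sub_nonneg.2 hpq.le) (sub_nonneg.2 hanti)]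
  · subst hmp
    have : Em = Ep := rfl
    nlinarith [mul_nonneg (sub_nonneg.2 hpq.le) (sub_nonneg.2 hanti)]
  · rcases lt_trichotomy m q with hmq | hmq | hmq
    · have hEmq : Eq ≤ Em := Ee_anti hm hmq.le
      nlinarith [mul_nonneg (sub_nonneg.2 hpq.le) (sub_nonneg.2 hEmq),
        mul_le_mul_of_nonneg_left (show q - m ≤ q - p by linarith) (sub_nonneg.2 hanti)]
    · subst hmq
      nlinarith [mul_nonneg (sub_nonneg.2 hpq.le) (sub_nonneg.2 hanti)]
    · have hc := Ee_combo hp hm hpq hmq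
      nlinarith [mul_nonneg (sub_nonneg.2 hpq.le) (sub_nonneg.2 hanti)]

/-- Right-chord global minorant with error. -/
lemma minorR {i : ℕ} {q r m : ℝ} (hq : (SetE j₀ j₁ x i q).Nonempty)
    (hr : (SetE j₀ j₁ x i r).Nonempty) (hm : (SetE j₀ j₁ x i m).Nonempty) (hqr : q < r) :
    (Ee j₀ j₁ x i r - Ee j₀ j₁ x i q) * (m - q) - (Ee j₀ j₁ x i q - Ee j₀ j₁ x i r) * (r - q)
      ≤ (r - q) * (Ee j₀ j₁ x i m - Ee j₀ j₁ x i q) := by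
  set Eq := Ee j₀ j₁ x i q
  set Er := Ee j₀ j₁ x i r
  set Em := Ee j₀ j₁ x i m
  have hanti : Er ≤ Eq := Ee_anti hq hqr.le
  rcases lt_trichotomy m q with hmq | hmq | hmq
  · have hc := Ee_combo hm hr hmq hqr
    nlinarith [mul_nonneg (sub_nonneg.2 hanti) (sub_nonneg.2 hqr.le)]
  · subst hmq
    nlinarith [mul_nonneg (sub_nonneg.2 hanti) (sub_nonneg.2 hqr.le)]
  · rcases lt_trichotomy m r with hmr | hmr | hmr
    · have hEmr : Er ≤ Em := Ee_anti hm hmr.le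
      nlinarith [mul_nonneg (sub_nonneg.2 hEmr) (sub_nonneg.2 hqr.le),
        mul_nonneg (sub_nonneg.2 hanti) (sub_nonneg.2 hmq.le)]
    · subst hmr
      nlinarith [mul_nonneg (sub_nonneg.2 hanti) (sub_nonneg.2 hqr.le)]
    · have hc := Ee_combo hq hm hqr hmr
      nlinarith [mul_nonneg (sub_nonneg.2 hanti) (sub_nonneg.2 hqr.le)]

/-- Mixed-chord key estimate: with `τ` a convex combination of the (negated) chord
slopes of `Ee i` over `[q-h,q]` and `[q,q+h]`, every decomposition of `x i` satisfies
`Ee i q + τ*q - τ*h ≤ ‖a‖ + τ*‖b‖`. -/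
lemma key_mix {i : ℕ} {q h θ τ : ℝ} (hpos : 0 < h)
    (hp : (SetE j₀ j₁ x i (q - h)).Nonempty) (hq : (SetE j₀ j₁ x i q).Nonempty)
    (hr : (SetE j₀ j₁ x i (q + h)).Nonempty) (hθ0 : 0 ≤ θ) (hθ1 : θ ≤ 1)
    (hτ : τ * h = θ * (Ee j₀ j₁ x i (q - h) - Ee j₀ j₁ x i q)
        + (1 - θ) * (Ee j₀ j₁ x i q - Ee j₀ j₁ x i (q + h)))
    {a : A₀} {b : A₁} (hab : x i = j₀ a + j₁ b) :
    Ee j₀ j₁ x i q + τ * q - τ * h ≤ ‖a‖ + τ * ‖b‖ := by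
  set m := ‖b‖ with hmdef
  have hm : (SetE j₀ j₁ x i m).Nonempty := ⟨‖a‖, a, b, hab, le_rfl, rfl⟩
  have hEm : Ee j₀ j₁ x i m ≤ ‖a‖ := Ee_le hab le_rfl
  have L := minorL hp hq hm (by linarith : q - h < q)
  have R := minorR hq hr hm (by linarith : q < q + h)
  rw [show q - (q - h) = h by ring] at L
  rw [show q + h - q = h by ring] at R
  set Ep := Ee j₀ j₁ x i (q - h)
  set Eq := Ee j₀ j₁ x i q
  set Er := Ee j₀ j₁ x i (q + h)
  set Em := Ee j₀ j₁ x i m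
  have s1 := mul_le_mul_of_nonneg_left L hθ0
  have s2 := mul_le_mul_of_nonneg_left R (by linarith : (0:ℝ) ≤ 1 - θ)
  have e2 : τ * h * (m - q) = (θ * (Ep - Eq) + (1 - θ) * (Eq - Er)) * (m - q) := by rw [hτ]
  have e3 : τ * h * h = (θ * (Ep - Eq) + (1 - θ) * (Eq - Er)) * h := by rw [hτ]
  have hEm' := mul_le_mul_of_nonneg_left hEm hpos.le
  have final : h * (Eq + τ * q - τ * h) ≤ h * (‖a‖ + τ * m) := by nlinarith [s1, s2, e2, e3, hEm']
  exact (mul_le_mul_iff_right₀ hpos).1 final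

/-- Pure right-chord key estimate. -/
lemma key_right {i : ℕ} {q h τ : ℝ} (hpos : 0 < h)
    (hq : (SetE j₀ j₁ x i q).Nonempty) (hr : (SetE j₀ j₁ x i (q + h)).Nonempty)
    (hτ : τ * h = Ee j₀ j₁ x i q - Ee j₀ j₁ x i (q + h))
    {a : A₀} {b : A₁} (hab : x i = j₀ a + j₁ b) :
    Ee j₀ j₁ x i q + τ * q - τ * h ≤ ‖a‖ + τ * ‖b‖ := by
  set m := ‖b‖ with hmdef
  have hm : (SetE j₀ j₁ x i m).Nonempty := ⟨‖a‖, a, b, hab, le_rfl, rfl⟩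
  have hEm : Ee j₀ j₁ x i m ≤ ‖a‖ := Ee_le hab le_rfl
  have R := minorR hq hr hm (by linarith : q < q + h)
  rw [show q + h - q = h by ring] at R
  set Eq := Ee j₀ j₁ x i q
  set Er := Ee j₀ j₁ x i (q + h)
  set Em := Ee j₀ j₁ x i m
  have e2 : τ * h * (m - q) = (Eq - Er) * (m - q) := by rw [hτ]
  have e3 : τ * h * h = (Eq - Er) * h := by rw [hτ]
  have hEm' := mul_le_mul_of_nonneg_left hEm hpos.le
  have final : h * (Eq + τ * q - τ * h) ≤ h * (‖a‖ + τ * m) := by nlinarith [R, e2, e3, hEm']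
  exact (mul_le_mul_iff_right₀ hpos).1 final

/-- Absorber key estimate: if no decomposition of `x i` has `‖b‖ ≤ q - h`, then ANY
`τ` at least as large as the negated right-chord slope works. -/
lemma key_abs {i : ℕ} {q h τ : ℝ} (hpos : 0 < h)
    (hp : SetE j₀ j₁ x i (q - h) = ∅) (hq : (SetE j₀ j₁ x i q).Nonempty)
    (hr : (SetE j₀ j₁ x i (q + h)).Nonempty)
    (hτge : Ee j₀ j₁ x i q - Ee j₀ j₁ x i (q + h) ≤ τ * h) (hτ0 : 0 ≤ τ)
    {a : A₀} {b : A₁} (hab : x i = j₀ a + j₁ b) :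
    Ee j₀ j₁ x i q + τ * q - τ * h ≤ ‖a‖ + τ * ‖b‖ := by
  set m := ‖b‖ with hmdef
  have hm : (SetE j₀ j₁ x i m).Nonempty := ⟨‖a‖, a, b, hab, le_rfl, rfl⟩
  have hEm : Ee j₀ j₁ x i m ≤ ‖a‖ := Ee_le hab le_rfl
  have hmgt : q - h < m := by
    by_contra hcon
    push_neg at hcon
    have : (‖a‖ : ℝ) ∈ SetE j₀ j₁ x i (q - h) := ⟨a, b, hab, hcon, rfl⟩
    rw [hp] at this
    exact this
  rcases le_or_gt q m with hmq | hmq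
  · have R := minorR hq hr hm (by linarith : q < q + h)
    rw [show q + h - q = h by ring] at R
    set Eq := Ee j₀ j₁ x i q
    set Er := Ee j₀ j₁ x i (q + h)
    set Em := Ee j₀ j₁ x i m
    have hEm' := mul_le_mul_of_nonneg_left hEm hpos.le
    have final : h * (Eq + τ * q - τ * h) ≤ h * (‖a‖ + τ * m) := by
      nlinarith [R, hEm', mul_nonneg (sub_nonneg.2 hmq) (sub_nonneg.2 hτge)]
    exact (mul_le_mul_iff_right₀ hpos).1 final
  · have hEmq : Ee j₀ j₁ x i q ≤ Ee j₀ j₁ x i m := Ee_anti hm hmq.le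
    have : τ * (q - h) ≤ τ * m := mul_le_mul_of_nonneg_left hmgt.le hτ0
    linarith

variable (j₀ j₁ x)

/-- `μ` is an admissible uniform level: decompositions with `‖b i‖ ≤ μ` exist for all `i`,
with summable infimal `ℓ¹`-costs. -/
def memD (μ : ℝ) : Prop :=
  (∀ i, (SetE j₀ j₁ x i μ).Nonempty) ∧ Summable (fun i => Ee j₀ j₁ x i μ)

noncomputable def Fe (μ : ℝ) : ℝ := ∑' i, Ee j₀ j₁ x i μ

variable {j₀ j₁ x}

lemma memD_mono {μ μ' : ℝ} (h : memD j₀ j₁ x μ) (hle : μ ≤ μ') : memD j₀ j₁ x μ' := by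
  refine ⟨fun i => (h.1 i).mono (SetE_subset hle), ?_⟩
  exact Summable.of_nonneg_of_le (fun i => Ee_nonneg i μ') (fun i => Ee_anti (h.1 i) hle) h.2

lemma Fe_nonneg (μ : ℝ) : 0 ≤ Fe j₀ j₁ x μ := tsum_nonneg fun i => Ee_nonneg i μ

lemma Fe_anti {μ μ' : ℝ} (h : memD j₀ j₁ x μ) (hle : μ ≤ μ') : Fe j₀ j₁ x μ' ≤ Fe j₀ j₁ x μ :=
  Summable.tsum_le_tsum (fun i => Ee_anti (h.1 i) hle) (memD_mono h hle).2 h.2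

lemma Ee_mid {i : ℕ} {q h : ℝ} (hpos : 0 < h) (hp : (SetE j₀ j₁ x i (q - h)).Nonempty)
    (hr : (SetE j₀ j₁ x i (q + h)).Nonempty) :
    2 * Ee j₀ j₁ x i q ≤ Ee j₀ j₁ x i (q - h) + Ee j₀ j₁ x i (q + h) := by
  have := Ee_combo hp hr (show q - h < q by linarith) (show q < q + h by linarith)
  have h2 : q + h - (q - h) = 2*h := by ring
  have h3 : q + h - q = h := by ring
  have h4 : q - (q - h) = h := by ring
  rw [h2, h3, h4] at this
  nlinarith [this]

lemma Fe_mid {q h : ℝ} (hpos : 0 < h) (hp : memD j₀ j₁ x (q - h)) (hr : memD j₀ j₁ x (q + h)) :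
    2 * Fe j₀ j₁ x q ≤ Fe j₀ j₁ x (q - h) + Fe j₀ j₁ x (q + h) := by
  have hq : memD j₀ j₁ x q := memD_mono hp (by linarith)
  calc 2 * Fe j₀ j₁ x q = ∑' i, 2 * Ee j₀ j₁ x i q := tsum_mul_left.symm
  _ ≤ ∑' i, (Ee j₀ j₁ x i (q - h) + Ee j₀ j₁ x i (q + h)) := by
      refine Summable.tsum_le_tsum (fun i => Ee_mid hpos (hp.1 i) (hr.1 i)) (hq.2.mul_left 2) (hp.2.add hr.2)
  _ = _ := Summable.tsum_add hp.2 hr.2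

lemma Kfun_nonneg {s : ℝ} (hs : 0 ≤ s) (v : V) : 0 ≤ Kfun j₀ j₁ s v := by
  refine Real.sInf_nonneg ?_
  rintro r ⟨a, b, -, rfl⟩
  positivity

lemma Kfun_le {s : ℝ} (hs : 0 ≤ s) {i : ℕ} {a : A₀} {b : A₁} (hab : x i = j₀ a + j₁ b) :
    Kfun j₀ j₁ s (x i) ≤ ‖a‖ + s * ‖b‖ := by
  refine csInf_le ⟨0, ?_⟩ ⟨a, b, hab, rfl⟩
  rintro r ⟨a', b', -, rfl⟩
  positivity

lemma Kfun_ge {s c : ℝ} {i : ℕ} {a₀ : A₀} {b₀ : A₁} (hab : x i = j₀ a₀ + j₁ b₀)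
    (h : ∀ a b, x i = j₀ a + j₁ b → c ≤ ‖a‖ + s * ‖b‖) : c ≤ Kfun j₀ j₁ s (x i) := by
  refine le_csInf ⟨‖a₀‖ + s * ‖b₀‖, a₀, b₀, hab, rfl⟩ ?_
  rintro r ⟨a, b, hab', rfl⟩
  exact h a b hab'

lemma memD_of_decomp {a : ℕ → A₀} {b : ℕ → A₁} (hsa : Summable fun i => ‖a i‖)
    (hbb : BddAbove (Set.range fun i => ‖b i‖)) (hab : ∀ i, x i = j₀ (a i) + j₁ (b i)) :
    memD j₀ j₁ x (⨆ i, ‖b i‖) := by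
  have hM : ∀ i, ‖b i‖ ≤ ⨆ i, ‖b i‖ := fun i => le_ciSup hbb i
  exact ⟨fun i => ⟨‖a i‖, a i, b i, hab i, hM i, rfl⟩,
    Summable.of_nonneg_of_le (fun i => Ee_nonneg _ _) (fun i => Ee_le (hab i) (hM i)) hsa⟩

lemma memD_nonneg {μ : ℝ} (h : memD j₀ j₁ x μ) : 0 ≤ μ := by
  obtain ⟨r, a, b, -, hb, -⟩ := h.1 0
  exact (norm_nonneg b).trans hb

lemma kl_le {t : ℝ} (ht : 0 ≤ t) {q : ℝ} (hD : memD j₀ j₁ x q) {δ : ℝ} (hδ : 0 < δ) :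
    Kl1linf j₀ j₁ t x ≤ Fe j₀ j₁ x q + t * q + δ := by
  have hch : ∀ i, ∃ a b, x i = j₀ a + j₁ b ∧ ‖b‖ ≤ q ∧
      ‖a‖ < Ee j₀ j₁ x i q + δ / 2 * (1 / 2) ^ i := fun i =>
    exists_SetE_lt (hD.1 i) (by positivity)
  choose a b hab hb ha using hch
  have hgeo : Summable fun i : ℕ => δ / 2 * (1 / 2 : ℝ) ^ i :=
    (summable_geometric_two).mul_left _
  have hbound : Summable fun i => Ee j₀ j₁ x i q + δ / 2 * (1 / 2) ^ i := hD.2.add hgeo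
  have hsa : Summable fun i => ‖a i‖ :=
    Summable.of_nonneg_of_le (fun i => norm_nonneg _) (fun i => (ha i).le) hbound
  have hbb : BddAbove (Set.range fun i => ‖b i‖) := ⟨q, by rintro _ ⟨i, rfl⟩; exact hb i⟩
  have hmem : (∑' i, ‖a i‖) + t * (⨆ i, ‖b i‖) ∈
      {r | ∃ (a : ℕ → A₀) (b : ℕ → A₁), Summable (fun i => ‖a i‖) ∧
        BddAbove (Set.range fun i => ‖b i‖) ∧ (∀ i, x i = j₀ (a i) + j₁ (b i)) ∧
        r = (∑' i, ‖a i‖) + t * (⨆ i, ‖b i‖)} := ⟨a, b, hsa, hbb, hab, rfl⟩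
  have hlb : ∀ r ∈ {r | ∃ (a : ℕ → A₀) (b : ℕ → A₁), Summable (fun i => ‖a i‖) ∧
        BddAbove (Set.range fun i => ‖b i‖) ∧ (∀ i, x i = j₀ (a i) + j₁ (b i)) ∧
        r = (∑' i, ‖a i‖) + t * (⨆ i, ‖b i‖)}, 0 ≤ r := by
    rintro r ⟨a', b', hsa', hbb', hab', rfl⟩
    have h1 : 0 ≤ ∑' i, ‖a' i‖ := tsum_nonneg fun i => norm_nonneg _
    have h2 : (0:ℝ) ≤ ⨆ i, ‖b' i‖ := Real.iSup_nonneg fun i => norm_nonneg _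
    positivity
  have hKle : Kl1linf j₀ j₁ t x ≤ (∑' i, ‖a i‖) + t * (⨆ i, ‖b i‖) :=
    csInf_le ⟨0, hlb⟩ hmem
  have h1 : (∑' i, ‖a i‖) ≤ Fe j₀ j₁ x q + δ := by
    have := Summable.tsum_le_tsum (fun i => (ha i).le) hsa hbound
    rw [Summable.tsum_add hD.2 hgeo, tsum_mul_left, tsum_geometric_two] at this
    calc (∑' i, ‖a i‖) ≤ Fe j₀ j₁ x q + δ / 2 * 2 := this
    _ = Fe j₀ j₁ x q + δ := by ring
  have h2 : t * (⨆ i, ‖b i‖) ≤ t * q :=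
    mul_le_mul_of_nonneg_left (ciSup_le hb) ht
  linarith

lemma sumK_le {t : ℝ} (ht : 0 ≤ t) {τ : ℕ → ℝ} (hτ0 : ∀ i, 0 ≤ τ i) (hτs : Summable τ)
    (hτt : (∑' i, τ i) ≤ t) (hKs : Summable fun i => Kfun j₀ j₁ (τ i) (x i))
    {a : ℕ → A₀} {b : ℕ → A₁} (hsa : Summable fun i => ‖a i‖)
    (hbb : BddAbove (Set.range fun i => ‖b i‖)) (hab : ∀ i, x i = j₀ (a i) + j₁ (b i)) :
    (∑' i, Kfun j₀ j₁ (τ i) (x i)) ≤ (∑' i, ‖a i‖) + t * (⨆ i, ‖b i‖) := by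
  set B := ⨆ i, ‖b i‖ with hBdef
  have hB : ∀ i, ‖b i‖ ≤ B := fun i => le_ciSup hbb i
  have hB0 : 0 ≤ B := (norm_nonneg (b 0)).trans (hB 0)
  have h1 : ∀ i, Kfun j₀ j₁ (τ i) (x i) ≤ ‖a i‖ + τ i * B := fun i => by
    have h2 := mul_le_mul_of_nonneg_left (hB i) (hτ0 i)
    have := Kfun_le (hτ0 i) (hab i)
    linarith
  calc (∑' i, Kfun j₀ j₁ (τ i) (x i)) ≤ ∑' i, (‖a i‖ + τ i * B) :=
        Summable.tsum_le_tsum h1 hKs (hsa.add (hτs.mul_right B))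
  _ = (∑' i, ‖a i‖) + (∑' i, τ i) * B := by rw [Summable.tsum_add hsa (hτs.mul_right B), tsum_mul_right]
  _ ≤ (∑' i, ‖a i‖) + t * B := by nlinarith [mul_le_mul_of_nonneg_right hτt hB0]

lemma main_construct {t : ℝ} (ht : 0 < t) (hx : MemSumSeq j₀ j₁ x) {δ : ℝ} (hδ : 0 < δ) :
    ∃ q τ, memD j₀ j₁ x q ∧ (∀ i, 0 ≤ τ i) ∧ Summable τ ∧ (∑' i, τ i) = t ∧
      (∀ i, ∀ a : A₀, ∀ b : A₁, x i = j₀ a + j₁ b →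
        Ee j₀ j₁ x i q + τ i * q - τ i * δ ≤ ‖a‖ + τ i * ‖b‖) := by
  classical
  obtain ⟨a0, b0, hsa0, hbb0, hab0⟩ := hx
  have hDM : memD j₀ j₁ x (⨆ i, ‖b0 i‖) := memD_of_decomp hsa0 hbb0 hab0
  by_cases hB : ∃ p μ, memD j₀ j₁ x p ∧ memD j₀ j₁ x μ ∧ p < μ ∧
      t * (μ - p) < Fe j₀ j₁ x p - Fe j₀ j₁ x μ
  · obtain ⟨p, μ, hDp, hDμ, hpμ, hsteep⟩ := hB
    set k : ℕ := max 1 ⌈(μ - p) / δ⌉₊ with hkdef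
    have hk1 : 1 ≤ k := le_max_left _ _
    have hk : (0:ℝ) < (k:ℝ) := by exact_mod_cast hk1
    set h : ℝ := (μ - p) / k with hhdef
    have hpos : 0 < h := div_pos (by linarith) hk
    have hhδ : h ≤ δ := by
      rw [hhdef, div_le_iff₀ hk]
      have h1 : (μ - p) / δ ≤ (⌈(μ - p) / δ⌉₊ : ℝ) := Nat.le_ceil _
      have h2 : ((⌈(μ - p) / δ⌉₊ : ℕ) : ℝ) ≤ (k:ℝ) := by exact_mod_cast le_max_right 1 _
      have h3 : (μ - p) / δ ≤ (k:ℝ) := h1.trans h2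
      have h4 : (μ - p) / δ * δ ≤ (k:ℝ) * δ := mul_le_mul_of_nonneg_right h3 hδ.le
      rw [div_mul_cancel₀ _ hδ.ne'] at h4
      linarith
    set g : ℕ → ℝ := fun j => p + j * h with hgdef
    have hgsucc : ∀ j : ℕ, g (j+1) = g j + h := by
      intro j; simp only [hgdef]; push_cast; ring
    have hg0 : g 0 = p := by simp [hgdef]
    have hgk : g k = μ := by
      simp only [hgdef, hhdef]
      field_simp
      ring
    have hgD : ∀ j, memD j₀ j₁ x (g j) := by
      intro j
      refine memD_mono hDp ?_
      simp only [hgdef]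
      have : 0 ≤ (j:ℝ) * h := by positivity
      linarith
    set d : ℕ → ℝ := fun j => Fe j₀ j₁ x (g j) - Fe j₀ j₁ x (g (j+1)) with hddef
    have hdanti : ∀ j, d (j+1) ≤ d j := by
      intro j
      have e1 : g (j+1) - h = g j := by rw [hgsucc]; ring
      have e2 : g (j+1) + h = g (j+1+1) := by rw [hgsucc (j+1)]
      have hmid := Fe_mid hpos (show memD j₀ j₁ x (g (j+1) - h) from e1 ▸ hgD j)
        (show memD j₀ j₁ x (g (j+1) + h) from e2 ▸ hgD (j+1+1))
      rw [e1, e2] at hmid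
      simp only [hddef]
      linarith
    have hdmono : Antitone d := antitone_nat_of_succ_le hdanti
    have hsteepex : ∃ j, t * h < d j := by
      by_contra hcon
      push_neg at hcon
      have hsum : ∑ j ∈ Finset.range k, d j = Fe j₀ j₁ x p - Fe j₀ j₁ x μ := by
        have := Finset.sum_range_sub' (fun j => Fe j₀ j₁ x (g j)) k
        rw [hg0, hgk] at this
        simpa [hddef] using this
      have hle : ∑ j ∈ Finset.range k, d j ≤ (k:ℝ) * (t*h) := by
        calc ∑ j ∈ Finset.range k, d j ≤ ∑ _j ∈ Finset.range k, t*h :=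
              Finset.sum_le_sum (fun j _ => hcon j)
        _ = (k:ℝ) * (t*h) := by rw [Finset.sum_const, Finset.card_range, nsmul_eq_mul]
      have heq : (k:ℝ) * (t * h) = t * (μ - p) := by
        rw [hhdef]; field_simp; try ring
      rw [hsum, heq] at hle
      linarith
    have hnonsteepex : ∃ j, d j ≤ t * h := by
      by_contra hcon
      push_neg at hcon
      have hth : 0 < t * h := by positivity
      obtain ⟨n, hn⟩ := exists_nat_gt (Fe j₀ j₁ x p / (t*h))
      have hsum : ∑ j ∈ Finset.range n, d j = Fe j₀ j₁ x p - Fe j₀ j₁ x (g n) := by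
        have := Finset.sum_range_sub' (fun j => Fe j₀ j₁ x (g j)) n
        rw [hg0] at this
        simpa [hddef] using this
      have hge : (n:ℝ) * (t*h) ≤ ∑ j ∈ Finset.range n, d j := by
        calc (n:ℝ) * (t*h) = ∑ _j ∈ Finset.range n, t*h := by
              rw [Finset.sum_const, Finset.card_range, nsmul_eq_mul]
        _ ≤ ∑ j ∈ Finset.range n, d j := Finset.sum_le_sum (fun j _ => (hcon j).le)
      have hFp : Fe j₀ j₁ x p < (n:ℝ) * (t*h) := by
        have := (div_lt_iff₀ hth).1 hn
        linarith
      have hFn : 0 ≤ Fe j₀ j₁ x (g n) := Fe_nonneg _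
      rw [hsum] at hge
      linarith
    set jc := Nat.find hnonsteepex with hjcdef
    have hjc : d jc ≤ t * h := Nat.find_spec hnonsteepex
    have hjcpos : jc ≠ 0 := by
      intro h0
      obtain ⟨j0, hj0⟩ := hsteepex
      have := hdmono (Nat.zero_le j0)
      rw [h0] at hjc
      linarith
    have hjc1 : jc - 1 + 1 = jc := Nat.succ_pred_eq_of_pos (Nat.pos_of_ne_zero hjcpos)
    have hjm : t * h < d (jc - 1) := by
      have hlt : jc - 1 < jc := Nat.sub_lt (Nat.pos_of_ne_zero hjcpos) one_pos
      have := Nat.find_min hnonsteepex hlt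
      exact not_le.1 this
    set q := g jc with hqdef
    have hqsub : q - h = g (jc - 1) := by
      have h5 := hgsucc (jc - 1)
      rw [hjc1] at h5
      rw [hqdef]; linarith
    have hqadd : q + h = g (jc + 1) := by rw [hqdef, hgsucc]
    have hDqh : memD j₀ j₁ x (q - h) := hqsub ▸ hgD (jc - 1)
    have hDq : memD j₀ j₁ x q := hgD jc
    have hDr : memD j₀ j₁ x (q + h) := hqadd ▸ hgD (jc + 1)
    have hd1 : d (jc - 1) = Fe j₀ j₁ x (q - h) - Fe j₀ j₁ x q := by
      simp only [hddef]
      rw [hjc1, ← hqsub, ← hqdef]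
    have hd2 : d jc = Fe j₀ j₁ x q - Fe j₀ j₁ x (q + h) := by
      simp only [hddef]
      rw [← hqadd, ← hqdef]
    have hsDm : Summable (fun i => Ee j₀ j₁ x i (q - h) - Ee j₀ j₁ x i q) :=
      hDqh.2.sub hDq.2
    have hsDp : Summable (fun i => Ee j₀ j₁ x i q - Ee j₀ j₁ x i (q + h)) :=
      hDq.2.sub hDr.2
    have hDm0 : ∀ i, 0 ≤ Ee j₀ j₁ x i (q - h) - Ee j₀ j₁ x i q := fun i =>
      sub_nonneg.2 (Ee_anti (hDqh.1 i) (by linarith))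
    have hDp0 : ∀ i, 0 ≤ Ee j₀ j₁ x i q - Ee j₀ j₁ x i (q + h) := fun i =>
      sub_nonneg.2 (Ee_anti (hDq.1 i) (by linarith))
    obtain ⟨Λm, hΛmd⟩ : ∃ v : ℝ, v = d (jc - 1) := ⟨_, rfl⟩
    obtain ⟨Λp, hΛpd⟩ : ∃ v : ℝ, v = d jc := ⟨_, rfl⟩
    have hΛm : ∑' i, (Ee j₀ j₁ x i (q - h) - Ee j₀ j₁ x i q) = Λm := by
      rw [hΛmd, hd1]; exact Summable.tsum_sub hDqh.2 hDq.2
    have hΛp : ∑' i, (Ee j₀ j₁ x i q - Ee j₀ j₁ x i (q + h)) = Λp := by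
      rw [hΛpd, hd2]; exact Summable.tsum_sub hDq.2 hDr.2
    have hjm' : t * h < Λm := by rw [hΛmd]; exact hjm
    have hjc' : Λp ≤ t * h := by rw [hΛpd]; exact hjc
    have hden : 0 < Λm - Λp := by linarith
    obtain ⟨θ, hθdef⟩ : ∃ v : ℝ, v = (t*h - Λp)/(Λm - Λp) := ⟨_, rfl⟩
    have hθ0 : 0 ≤ θ := by rw [hθdef]; exact div_nonneg (by linarith) hden.le
    have hθ1 : θ ≤ 1 := by rw [hθdef, div_le_one hden]; linarith
    obtain ⟨τ, hτdef⟩ : ∃ τ : ℕ → ℝ, τ = fun i =>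
        (θ * (Ee j₀ j₁ x i (q - h) - Ee j₀ j₁ x i q)
          + (1-θ) * (Ee j₀ j₁ x i q - Ee j₀ j₁ x i (q + h)))/h := ⟨_, rfl⟩
    have hτ0 : ∀ i, 0 ≤ τ i := by
      intro i
      rw [hτdef]
      exact div_nonneg (add_nonneg (mul_nonneg hθ0 (hDm0 i))
        (mul_nonneg (by linarith) (hDp0 i))) hpos.le
    have hτs : Summable τ := by
      rw [hτdef]
      exact ((hsDm.mul_left θ).add (hsDp.mul_left (1-θ))).div_const h
    have hτsum : ∑' i, τ i = t := by
      rw [hτdef]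
      simp only [div_eq_mul_inv]
      rw [tsum_mul_right, Summable.tsum_add (hsDm.mul_left θ) (hsDp.mul_left (1-θ)),
        tsum_mul_left, tsum_mul_left, hΛm, hΛp]
      have hexp : θ * Λm + (1-θ) * Λp = t * h := by
        rw [hθdef]; field_simp; ring
      rw [hexp]
      field_simp
    refine ⟨q, τ, hDq, hτ0, hτs, hτsum, ?_⟩
    intro i a b hab
    have hτi : τ i * h = θ * (Ee j₀ j₁ x i (q - h) - Ee j₀ j₁ x i q)
        + (1 - θ) * (Ee j₀ j₁ x i q - Ee j₀ j₁ x i (q + h)) := by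
      rw [hτdef, div_mul_cancel₀ _ hpos.ne']
    have hkey := key_mix hpos (hDqh.1 i) (hDq.1 i) (hDr.1 i) hθ0 hθ1 hτi hab
    have h1 : τ i * h ≤ τ i * δ := mul_le_mul_of_nonneg_left hhδ (hτ0 i)
    linarith
  · push_neg at hB
    have hDne : Set.Nonempty {μ | memD j₀ j₁ x μ} := ⟨_, hDM⟩
    have hDbdd : BddBelow {μ | memD j₀ j₁ x μ} := ⟨0, fun μ hμ => memD_nonneg hμ⟩
    obtain ⟨z, hzD, hz⟩ := exists_lt_of_csInf_lt hDne
      (show sInf {μ | memD j₀ j₁ x μ} < sInf {μ | memD j₀ j₁ x μ} + δ/2 by linarith)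
    have hDq : memD j₀ j₁ x z := hzD
    have hDr : memD j₀ j₁ x (z + δ) := memD_mono hDq (by linarith)
    have hpnot : ¬ memD j₀ j₁ x (z - δ) := by
      intro hcon
      have : sInf {μ | memD j₀ j₁ x μ} ≤ z - δ := csInf_le hDbdd hcon
      linarith
    have hsDp : Summable (fun i => Ee j₀ j₁ x i z - Ee j₀ j₁ x i (z + δ)) := hDq.2.sub hDr.2
    have hDp0 : ∀ i, 0 ≤ Ee j₀ j₁ x i z - Ee j₀ j₁ x i (z + δ) := fun i =>
      sub_nonneg.2 (Ee_anti (hDq.1 i) (by linarith))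
    obtain ⟨Λp, hΛpd⟩ : ∃ v : ℝ, v = ∑' i, (Ee j₀ j₁ x i z - Ee j₀ j₁ x i (z + δ)) := ⟨_, rfl⟩
    have hΛp : ∑' i, (Ee j₀ j₁ x i z - Ee j₀ j₁ x i (z + δ)) = Λp := hΛpd.symm
    have hΛp0 : 0 ≤ Λp := by rw [hΛpd]; exact tsum_nonneg hDp0
    have hΛple : Λp ≤ t * δ := by
      have h1 := hB z (z+δ) hDq hDr (by linarith)
      rw [show z + δ - z = δ by ring] at h1
      have h2 : Fe j₀ j₁ x z - Fe j₀ j₁ x (z + δ) = Λp := by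
        rw [hΛpd]; exact (Summable.tsum_sub hDq.2 hDr.2).symm
      linarith
    by_cases hall : ∀ i, (SetE j₀ j₁ x i (z - δ)).Nonempty
    · have hnots : ¬ Summable (fun i => Ee j₀ j₁ x i (z - δ)) := fun hcon => hpnot ⟨hall, hcon⟩
      have hDm0 : ∀ i, 0 ≤ Ee j₀ j₁ x i (z - δ) - Ee j₀ j₁ x i z := fun i =>
        sub_nonneg.2 (Ee_anti (hall i) (by linarith))
      have hnotsDm : ¬ Summable (fun i => Ee j₀ j₁ x i (z - δ) - Ee j₀ j₁ x i z) := by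
        intro hcon
        have h5 := hcon.add hDq.2
        have heq : (fun i => (Ee j₀ j₁ x i (z-δ) - Ee j₀ j₁ x i z) + Ee j₀ j₁ x i z)
            = fun i => Ee j₀ j₁ x i (z - δ) := by funext i; ring
        rw [heq] at h5
        exact hnots h5
      have htend : Tendsto (fun n => ∑ i ∈ Finset.range n,
          (Ee j₀ j₁ x i (z - δ) - Ee j₀ j₁ x i z)) atTop atTop := by
        by_contra hc
        exact hnotsDm ((summable_iff_not_tendsto_nat_atTop_of_nonneg hDm0).2 hc)
      obtain ⟨n, hn⟩ := (htend.eventually_ge_atTop (Λp + t*δ + 1)).exists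
      have hEmEp : ∀ i, Ee j₀ j₁ x i z - Ee j₀ j₁ x i (z + δ)
          ≤ Ee j₀ j₁ x i (z - δ) - Ee j₀ j₁ x i z := fun i => by
        have := Ee_mid hδ (hall i) (hDr.1 i)
        linarith
      obtain ⟨W, hWd⟩ : ∃ v : ℝ, v = ∑ i ∈ Finset.range n,
          ((Ee j₀ j₁ x i (z-δ) - Ee j₀ j₁ x i z) - (Ee j₀ j₁ x i z - Ee j₀ j₁ x i (z+δ))) :=
        ⟨_, rfl⟩
      have hWge : t*δ + 1 ≤ W := by
        rw [hWd, Finset.sum_sub_distrib]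
        have h1 : ∑ i ∈ Finset.range n, (Ee j₀ j₁ x i z - Ee j₀ j₁ x i (z+δ)) ≤ Λp := by
          rw [hΛpd]; exact Summable.sum_le_tsum _ (fun i _ => hDp0 i) hsDp
        linarith [hn, h1]
      have htδ : 0 < t * δ := mul_pos ht hδ
      have hWpos : 0 < W := by linarith
      obtain ⟨θ, hθdef⟩ : ∃ v : ℝ, v = (t*δ - Λp)/W := ⟨_, rfl⟩
      have hθ0 : 0 ≤ θ := by rw [hθdef]; exact div_nonneg (by linarith) hWpos.le
      have hθ1 : θ ≤ 1 := by rw [hθdef, div_le_one hWpos]; linarith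
      obtain ⟨τ, hτdef⟩ : ∃ τ : ℕ → ℝ, τ = fun i =>
          ((Ee j₀ j₁ x i z - Ee j₀ j₁ x i (z+δ)) + (if i < n then
            θ * ((Ee j₀ j₁ x i (z-δ) - Ee j₀ j₁ x i z) - (Ee j₀ j₁ x i z - Ee j₀ j₁ x i (z+δ)))
            else 0))/δ := ⟨_, rfl⟩
      have hfin : Summable (fun i => if i < n then
          θ * ((Ee j₀ j₁ x i (z-δ) - Ee j₀ j₁ x i z) - (Ee j₀ j₁ x i z - Ee j₀ j₁ x i (z+δ)))
          else 0) := by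
        refine summable_of_ne_finset_zero (s := Finset.range n) (fun i hi => ?_)
        rw [Finset.mem_range] at hi
        simp [hi]
      have hτ0 : ∀ i, 0 ≤ τ i := by
        intro i
        simp only [hτdef]
        refine div_nonneg (add_nonneg (hDp0 i) ?_) hδ.le
        by_cases hin : i < n
        · rw [if_pos hin]
          exact mul_nonneg hθ0 (by linarith [hEmEp i])
        · rw [if_neg hin]
      have hτs : Summable τ := by
        rw [hτdef]
        exact (hsDp.add hfin).div_const δ
      have hτsum : (∑' i, τ i) = t := by
        rw [hτdef]
        simp only [div_eq_mul_inv]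
        rw [tsum_mul_right, Summable.tsum_add hsDp hfin, hΛp]
        have h2 : (∑' i, (if i < n then
            θ * ((Ee j₀ j₁ x i (z-δ) - Ee j₀ j₁ x i z) - (Ee j₀ j₁ x i z - Ee j₀ j₁ x i (z+δ)))
            else 0)) = θ * W := by
          rw [tsum_eq_sum (s := Finset.range n) (fun i hi => by
            rw [Finset.mem_range] at hi; simp [hi])]
          rw [hWd, Finset.mul_sum]
          refine Finset.sum_congr rfl (fun i hi => ?_)
          rw [Finset.mem_range] at hi
          rw [if_pos hi]
        rw [h2]
        have hθW : θ * W = t*δ - Λp := by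
          rw [hθdef, div_mul_cancel₀ _ hWpos.ne']
        rw [hθW, show Λp + (t*δ - Λp) = t * δ by ring]
        field_simp
      refine ⟨z, τ, hDq, hτ0, hτs, hτsum, ?_⟩
      intro i a b hab
      by_cases hin : i < n
      · have hτi : τ i * δ = θ * (Ee j₀ j₁ x i (z-δ) - Ee j₀ j₁ x i z)
            + (1-θ) * (Ee j₀ j₁ x i z - Ee j₀ j₁ x i (z+δ)) := by
          simp only [hτdef]
          rw [if_pos hin, div_mul_cancel₀ _ hδ.ne']
          ring
        have hkey := key_mix hδ (hall i) (hDq.1 i) (hDr.1 i) hθ0 hθ1 hτi hab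
        linarith
      · have hτi : τ i * δ = Ee j₀ j₁ x i z - Ee j₀ j₁ x i (z+δ) := by
          simp only [hτdef]
          rw [if_neg hin, add_zero, div_mul_cancel₀ _ hδ.ne']
        have hkey := key_right hδ (hDq.1 i) (hDr.1 i) hτi hab
        linarith
    · push_neg at hall
      obtain ⟨i₀, hempty⟩ := hall
      obtain ⟨β, hβdef⟩ : ∃ v : ℝ, v = t - Λp/δ := ⟨_, rfl⟩
      have hβ0 : 0 ≤ β := by
        rw [hβdef]
        have h6 : Λp/δ ≤ t := (div_le_iff₀ hδ).2 (by linarith)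
        linarith
      obtain ⟨τ, hτdef⟩ : ∃ τ : ℕ → ℝ, τ = fun i =>
          (Ee j₀ j₁ x i z - Ee j₀ j₁ x i (z+δ))/δ + (if i = i₀ then β else 0) := ⟨_, rfl⟩
      have hfin : Summable (fun i : ℕ => if i = i₀ then β else 0) := by
        refine summable_of_ne_finset_zero (s := {i₀}) (fun i hi => ?_)
        rw [Finset.mem_singleton] at hi
        simp [hi]
      have hτ0 : ∀ i, 0 ≤ τ i := by
        intro i
        simp only [hτdef]
        refine add_nonneg (div_nonneg (hDp0 i) hδ.le) ?_
        by_cases hin : i = i₀ <;> simp [hin, hβ0]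
      have hτs : Summable τ := by
        rw [hτdef]
        exact (hsDp.div_const δ).add hfin
      have hτsum : (∑' i, τ i) = t := by
        rw [hτdef]
        rw [Summable.tsum_add (hsDp.div_const δ) hfin, show (∑' i : ℕ, if i = i₀ then β else 0) = β from tsum_ite_eq i₀ (fun _ => β)]
        have h1 : (∑' i, (Ee j₀ j₁ x i z - Ee j₀ j₁ x i (z+δ))/δ) = Λp/δ := by
          simp only [div_eq_mul_inv]
          rw [tsum_mul_right, hΛp]
        rw [h1, hβdef]
        ring
      refine ⟨z, τ, hDq, hτ0, hτs, hτsum, ?_⟩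
      intro i a b hab
      by_cases hin : i = i₀
      · subst hin
        have hτge : Ee j₀ j₁ x i z - Ee j₀ j₁ x i (z+δ) ≤ τ i * δ := by
          simp only [hτdef, eq_self_iff_true, if_true]
          rw [add_mul, div_mul_cancel₀ _ hδ.ne']
          nlinarith [mul_nonneg hβ0 hδ.le]
        have hkey := key_abs hδ hempty (hDq.1 i) (hDr.1 i) hτge (hτ0 i) hab
        linarith
      · have hτi : τ i * δ = Ee j₀ j₁ x i z - Ee j₀ j₁ x i (z+δ) := by
          simp only [hτdef]
          rw [if_neg hin, add_zero, div_mul_cancel₀ _ hδ.ne']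
        have hkey := key_right hδ (hDq.1 i) (hDr.1 i) hτi hab
        linarith

end Aux
/-- Corollary 3: for every `x ∈ ℓ₁(A₀) + ℓ_∞(A₁)` (no finite support assumption),
`K_t(x; ℓ₁(A₀), ℓ_∞(A₁)) = sup { Σᵢ K_{tᵢ}(xᵢ; A₀, A₁) : tᵢ ≥ 0, Σ tᵢ ≤ t }`. -/
theorem Kl1linf_eq_KsupSum
    {V A₀ A₁ : Type*} [AddCommGroup V] [Module ℝ V] [TopologicalSpace V]
    [IsTopologicalAddGroup V] [ContinuousSMul ℝ V] [T2Space V]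
    [NormedAddCommGroup A₀] [NormedSpace ℝ A₀] [CompleteSpace A₀]
    [NormedAddCommGroup A₁] [NormedSpace ℝ A₁] [CompleteSpace A₁]
    (j₀ : A₀ →ₗ[ℝ] V) (j₁ : A₁ →ₗ[ℝ] V)
    (hc₀ : Continuous j₀) (hc₁ : Continuous j₁)
    (hi₀ : Function.Injective j₀) (hi₁ : Function.Injective j₁)
    (x : ℕ → V) (hx : MemSumSeq j₀ j₁ x) (t : ℝ) (ht : 0 < t) :
    Kl1linf j₀ j₁ t x = KsupSum j₀ j₁ t x := by
  obtain ⟨a0, b0, hsa0, hbb0, hab0⟩ := hx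
  have hxm : MemSumSeq j₀ j₁ x := ⟨a0, b0, hsa0, hbb0, hab0⟩
  have hbM : ∀ i, ‖b0 i‖ ≤ ⨆ i, ‖b0 i‖ := fun i => le_ciSup hbb0 i
  have hIne : {r | ∃ (a : ℕ → A₀) (b : ℕ → A₁), Summable (fun i => ‖a i‖) ∧
      BddAbove (Set.range fun i => ‖b i‖) ∧ (∀ i, x i = j₀ (a i) + j₁ (b i)) ∧
      r = (∑' i, ‖a i‖) + t * (⨆ i, ‖b i‖)}.Nonempty :=
    ⟨_, a0, b0, hsa0, hbb0, hab0, rfl⟩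
  have hSbdd : BddAbove {s | ∃ τ : ℕ → ℝ, (∀ i, 0 ≤ τ i) ∧ Summable τ ∧ (∑' i, τ i) ≤ t ∧
      Summable (fun i => Kfun j₀ j₁ (τ i) (x i)) ∧ s = ∑' i, Kfun j₀ j₁ (τ i) (x i)} := by
    refine ⟨(∑' i, ‖a0 i‖) + t * (⨆ i, ‖b0 i‖), ?_⟩
    rintro s ⟨τ, hτ0, hτs, hτt, hKs, rfl⟩
    exact sumK_le ht.le hτ0 hτs hτt hKs hsa0 hbb0 hab0
  have hK0 : 0 ≤ Kl1linf j₀ j₁ t x := by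
    unfold Kl1linf
    refine Real.sInf_nonneg ?_
    rintro r ⟨a, b, hsa, hbb, hab, rfl⟩
    have h1 : 0 ≤ ∑' i, ‖a i‖ := tsum_nonneg fun i => norm_nonneg _
    have h2 : (0:ℝ) ≤ ⨆ i, ‖b i‖ := Real.iSup_nonneg fun i => norm_nonneg _
    have h3 := mul_nonneg ht.le h2
    linarith
  apply le_antisymm
  · -- hard direction: Kl1linf ≤ KsupSum
    refine le_of_forall_pos_le_add fun ε hε => ?_
    obtain ⟨δ, hδdef⟩ : ∃ v : ℝ, v = ε / (2*(t+1)) := ⟨_, rfl⟩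
    have hδ : 0 < δ := by rw [hδdef]; positivity
    have hδε : δ * (2*(t+1)) = ε := by rw [hδdef]; field_simp
    have htδ : t * δ ≤ ε / 2 := by nlinarith [hδ.le, ht.le]
    obtain ⟨q, τ, hDq, hτ0, hτs, hτsum, hper⟩ := main_construct ht hxm hδ
    have hKfl : ∀ i, Ee j₀ j₁ x i q + τ i * q - τ i * δ ≤ Kfun j₀ j₁ (τ i) (x i) := fun i =>
      Kfun_ge (hab0 i) (fun a b hab => hper i a b hab)
    have hKs : Summable (fun i => Kfun j₀ j₁ (τ i) (x i)) := by
      refine Summable.of_nonneg_of_le (fun i => Kfun_nonneg (hτ0 i) _) (fun i => ?_)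
        (hsa0.add (hτs.mul_right (⨆ i, ‖b0 i‖)))
      have h4 := Kfun_le (hτ0 i) (hab0 i)
      have h5 := mul_le_mul_of_nonneg_left (hbM i) (hτ0 i)
      linarith
    have hsum1 : Summable (fun i => Ee j₀ j₁ x i q + τ i * q - τ i * δ) :=
      (hDq.2.add (hτs.mul_right q)).sub (hτs.mul_right δ)
    have hlow : Fe j₀ j₁ x q + t*q - t*δ ≤ ∑' i, Kfun j₀ j₁ (τ i) (x i) := by
      have h6 := Summable.tsum_le_tsum hKfl hsum1 hKs
      rw [Summable.tsum_sub (hDq.2.add (hτs.mul_right q)) (hτs.mul_right δ),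
        Summable.tsum_add hDq.2 (hτs.mul_right q), tsum_mul_right, tsum_mul_right, hτsum] at h6
      exact h6
    have hmem : (∑' i, Kfun j₀ j₁ (τ i) (x i)) ∈ {s | ∃ τ : ℕ → ℝ, (∀ i, 0 ≤ τ i) ∧
        Summable τ ∧ (∑' i, τ i) ≤ t ∧ Summable (fun i => Kfun j₀ j₁ (τ i) (x i)) ∧
        s = ∑' i, Kfun j₀ j₁ (τ i) (x i)} := ⟨τ, hτ0, hτs, le_of_eq hτsum, hKs, rfl⟩
    have hSup : (∑' i, Kfun j₀ j₁ (τ i) (x i)) ≤ KsupSum j₀ j₁ t x := by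
      unfold KsupSum
      exact le_csSup hSbdd hmem
    have hkl := kl_le ht.le hDq (show (0:ℝ) < ε/2 by positivity)
    linarith
  · -- easy direction: KsupSum ≤ Kl1linf
    unfold KsupSum
    refine Real.sSup_le ?_ hK0
    rintro s ⟨τ, hτ0, hτs, hτt, hKs, rfl⟩
    unfold Kl1linf
    refine le_csInf hIne ?_
    rintro r ⟨a, b, hsa, hbb, hab, rfl⟩
    exact sumK_le ht.le hτ0 hτs hτt hKs hsa hbb hab
end
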